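/- Fix c ≥ 0 and 1 ≤ m ≤ l, and let λ, μ ∈ 𝒫^l_n with λ ⊵ μ and |λ_L(c,m)| = |μ_L(c,m)| =: n_L. Then Std_λ(μ) = { t_L # t_R : t_L ∈ Std_{λ_L(c,m)}(μ_L(c,m)), t_R ∈ Std_{λ_R(c,m)}(μ_R(c,m)) }. -/

import Mathlib

namespace FS

open scoped Classical

/-- A node `(r, c, m)`: row `r`, column `c`, component `m` (all 1-based). -/
abbrev Node := ℕ × ℕ × ℕ

/-- Membership of a node in the Young diagram of the multipartition `p`,
where `p m r` is the `r`-th part of the `m`-th component. -/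
def InDiag (p : ℕ → ℕ → ℕ) (A : Node) : Prop :=
  1 ≤ A.2.1 ∧ A.2.1 ≤ p A.2.2 A.1

/-- `p` is an `l`-multipartition of `n` (components indexed `1,…,l`, rows indexed `1,…`). -/
def IsMP (l n : ℕ) (p : ℕ → ℕ → ℕ) : Prop :=
  (∀ m r, (m = 0 ∨ l < m ∨ r = 0 ∨ n < r) → p m r = 0) ∧
  (∀ m r, 1 ≤ r → p m (r + 1) ≤ p m r) ∧
  (∑ m ∈ Finset.Icc 1 l, ∑ r ∈ Finset.Icc 1 n, p m r) = n

/-- Total size of an `l`-multicomposition (rows bounded by `n`). -/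
def mpSize (l n : ℕ) (p : ℕ → ℕ → ℕ) : ℕ :=
  ∑ m ∈ Finset.Icc 1 l, ∑ r ∈ Finset.Icc 1 n, p m r

/-- Size of the `m`-th component. -/
def compSize (n : ℕ) (p : ℕ → ℕ → ℕ) (m : ℕ) : ℕ :=
  ∑ r ∈ Finset.Icc 1 n, p m r

/-- Length of column `c` of component `m`, i.e. `(p^(m))'_c`. -/
def colLen (n : ℕ) (p : ℕ → ℕ → ℕ) (m c : ℕ) : ℕ :=
  ((Finset.Icc 1 n).filter fun r => c ≤ p m r).card

/-- Dominance order on `l`-multicompositions: `Dom l N p q` means `p ⊵ q`. -/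
def Dom (l N : ℕ) (p q : ℕ → ℕ → ℕ) : Prop :=
  ∀ m r, 1 ≤ m → m ≤ l →
    (∑ m' ∈ Finset.Icc 1 (m - 1), compSize N q m') + ∑ r' ∈ Finset.Icc 1 r, q m r' ≤
      (∑ m' ∈ Finset.Icc 1 (m - 1), compSize N p m') + ∑ r' ∈ Finset.Icc 1 r, p m r'

/-- `t` is a `p`-tableau: a bijection from the diagram of `p` onto `{1,…,n}`. -/
def IsTab (n : ℕ) (p : ℕ → ℕ → ℕ) (t : Node → ℕ) : Prop :=
  (∀ A, InDiag p A → 1 ≤ t A ∧ t A ≤ n) ∧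
  (∀ A B, InDiag p A → InDiag p B → t A = t B → A = B) ∧
  (∀ i, 1 ≤ i → i ≤ n → ∃ A, InDiag p A ∧ t A = i)

/-- Entries increase from left to right along each row. -/
def RowStrict (p : ℕ → ℕ → ℕ) (t : Node → ℕ) : Prop :=
  ∀ r c m, InDiag p (r, c, m) → InDiag p (r, c + 1, m) → t (r, c, m) < t (r, c + 1, m)

/-- Entries increase down each column. -/
def ColStrict (p : ℕ → ℕ → ℕ) (t : Node → ℕ) : Prop :=
  ∀ r c m, InDiag p (r, c, m) → InDiag p (r + 1, c, m) → t (r, c, m) < t (r + 1, c, m)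

/-- A standard tableau is both row-strict and column-strict. -/
def IsStd (p : ℕ → ℕ → ℕ) (t : Node → ℕ) : Prop := RowStrict p t ∧ ColStrict p t

/-- The tableau `t_λ`, obtained by writing `1,…,n` in order down successive columns
from left to right (components from `l` down to `1`). -/
def colTab (l n : ℕ) (p : ℕ → ℕ → ℕ) : Node → ℕ := fun A =>
  (∑ m' ∈ Finset.Icc (A.2.2 + 1) l, compSize n p m') +
    (∑ c' ∈ Finset.Icc 1 (A.2.1 - 1), colLen n p A.2.2 c') + A.1

/-- The tableau `t^λ`, obtained by writing `1,…,n` in order along successive rows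
from top to bottom (components from `1` up to `l`). -/
def rowTab (n : ℕ) (p : ℕ → ℕ → ℕ) : Node → ℕ := fun A =>
  (∑ m' ∈ Finset.Icc 1 (A.2.2 - 1), compSize n p m') +
    (∑ r' ∈ Finset.Icc 1 (A.1 - 1), p A.2.2 r') + A.2.1

/-- The Coxeter generator `s_i = (i, i+1)` of the symmetric group. -/
def sw (i : ℕ) : Equiv.Perm ℕ := Equiv.swap i (i + 1)

/-- The product `s_{i_1} ⋯ s_{i_k}` corresponding to a word `L = [i_1,…,i_k]`. -/
def wordProd (L : List ℕ) : Equiv.Perm ℕ := (L.map sw).prod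

/-- `L` is an expression for `w` in the Coxeter generators `s_1,…,s_{n-1}` of `S_n`. -/
def IsWord (n : ℕ) (L : List ℕ) (w : Equiv.Perm ℕ) : Prop :=
  (∀ i ∈ L, 1 ≤ i ∧ i + 1 ≤ n) ∧ wordProd L = w

/-- The Coxeter length of `w ∈ S_n`. -/
noncomputable def len (n : ℕ) (w : Equiv.Perm ℕ) : ℕ :=
  sInf {k | ∃ L, IsWord n L w ∧ L.length = k}

/-- `L` is a reduced expression for `w ∈ S_n`. -/
def IsReduced (n : ℕ) (L : List ℕ) (w : Equiv.Perm ℕ) : Prop :=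
  IsWord n L w ∧ L.length = len n w

/-- The Bruhat order on `S_n`: `x ≤ w` iff some reduced expression for `w` has an
expression for `x` as a subsequence. -/
def BruhatLE (n : ℕ) (x w : Equiv.Perm ℕ) : Prop :=
  ∃ L, IsReduced n L w ∧ ∃ L', L'.Sublist L ∧ wordProd L' = x

/-- Strict Bruhat order. -/
def BruhatLT (n : ℕ) (x w : Equiv.Perm ℕ) : Prop := BruhatLE n x w ∧ x ≠ w

/-- The left (weak) order on `S_n`: `x ≤_L w` iff `ℓ(w) = ℓ(w x⁻¹) + ℓ(x)`. -/
def LeftLE (n : ℕ) (x w : Equiv.Perm ℕ) : Prop :=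
  len n w = len n (w * x⁻¹) + len n x

/-- `w` is a permutation of `{1,…,n}` (fixing everything else). -/
def PermOf (n : ℕ) (w : Equiv.Perm ℕ) : Prop := ∀ i, i = 0 ∨ n < i → w i = i

/-- `w` is the permutation sending the base tableau `base` to the tableau `t`
(e.g. `w = w_t` when `base = t_λ`). -/
def IsPermOfTab (n : ℕ) (p : ℕ → ℕ → ℕ) (base t : Node → ℕ) (w : Equiv.Perm ℕ) : Prop :=
  PermOf n w ∧ ∀ A, InDiag p A → w (base A) = t A

/-- `Shape(t↓j)`: the multicomposition whose `(m, r)` entry is the number of nodes in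
row `r` of component `m` whose entry under `t` is at most `j`. -/
def shape (n : ℕ) (p : ℕ → ℕ → ℕ) (t : Node → ℕ) (j : ℕ) : ℕ → ℕ → ℕ :=
  fun m r => ((Finset.Icc 1 n).filter fun c => c ≤ p m r ∧ t (r, c, m) ≤ j).card

/-- `Shape(t↓j)'`: the conjugate multicomposition, whose `(m, c)` entry is the number of
nodes in column `c` of component `l + 1 - m` whose entry under `t` is at most `j`. -/
def shapeConj (l n : ℕ) (p : ℕ → ℕ → ℕ) (t : Node → ℕ) (j : ℕ) : ℕ → ℕ → ℕ :=
  fun m c => ((Finset.Icc 1 n).filter fun r => c ≤ p (l + 1 - m) r ∧ t (r, c, l + 1 - m) ≤ j).card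

/-- `A` lies weakly to the left of `B`. -/
def WeaklyLeft (A B : Node) : Prop :=
  B.2.2 < A.2.2 ∨ (A.2.2 = B.2.2 ∧ A.2.1 ≤ B.2.1)

/-- `A` lies weakly above `B`. -/
def WeaklyAbove (A B : Node) : Prop :=
  A.2.2 < B.2.2 ∨ (A.2.2 = B.2.2 ∧ A.1 ≤ B.1)

/-- `A` lies weakly to the right of `B`. -/
def WeaklyRight (A B : Node) : Prop :=
  A.2.2 < B.2.2 ∨ (A.2.2 = B.2.2 ∧ B.2.1 ≤ A.2.1)

/-- `t` (a `mu`-tableau) is `lam`-column-dominated on `1,…,j`: each `i ≤ j` appears in `t`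
at least as far to the left as it does in `t_lam`. -/
def ColDomOn (l n : ℕ) (lam mu : ℕ → ℕ → ℕ) (t : Node → ℕ) (j : ℕ) : Prop :=
  ∀ i A B, 1 ≤ i → i ≤ j → InDiag mu A → t A = i → InDiag lam B →
    colTab l n lam B = i → WeaklyLeft A B

/-- `t` is weakly `lam`-column-dominated on `1,…,j`: each `i ≤ j` appears in `t` in a
component at least as far to the left as it does in `t_lam`. -/
def WColDomOn (l n : ℕ) (lam mu : ℕ → ℕ → ℕ) (t : Node → ℕ) (j : ℕ) : Prop :=
  ∀ i A B, 1 ≤ i → i ≤ j → InDiag mu A → t A = i → InDiag lam B →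
    colTab l n lam B = i → B.2.2 ≤ A.2.2

/-- `t` (a `mu`-tableau) is `lam`-row-dominated on `1,…,j`: each `i ≤ j` appears in `t`
at least as high as it does in `t^lam`. -/
def RowDomOn (n : ℕ) (lam mu : ℕ → ℕ → ℕ) (t : Node → ℕ) (j : ℕ) : Prop :=
  ∀ i A B, 1 ≤ i → i ≤ j → InDiag mu A → t A = i → InDiag lam B →
    rowTab n lam B = i → WeaklyAbove A B

/-- The multipartition `λ_L(c, m)`: the first `c` columns of component `m`, followed by
components `m+1,…,l`. -/
def leftPart (lam : ℕ → ℕ → ℕ) (c m : ℕ) : ℕ → ℕ → ℕ := fun k r =>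
  if k = 0 then 0 else if k = 1 then min (lam m r) c else lam (m + k - 1) r

/-- The multipartition `λ_R(c, m)`: components `1,…,m-1`, followed by the part of
component `m` after its first `c` columns. -/
def rightPart (lam : ℕ → ℕ → ℕ) (c m : ℕ) : ℕ → ℕ → ℕ := fun k r =>
  if k < m then lam k r else if k = m then lam m r - c else 0

/-- The multipartition `λ_T(r₀, m)`: components `1,…,m-1`, followed by the first `r₀`
rows of component `m`. -/
def topPart (lam : ℕ → ℕ → ℕ) (r₀ m : ℕ) : ℕ → ℕ → ℕ := fun k r =>
  if k < m then lam k r else if k = m then (if r ≤ r₀ then lam m r else 0) else 0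

/-- The multipartition `λ_B(r₀, m)`: the rows of component `m` after row `r₀`, followed
by components `m+1,…,l`. -/
def botPart (lam : ℕ → ℕ → ℕ) (r₀ m : ℕ) : ℕ → ℕ → ℕ := fun k r =>
  if k = 0 ∨ r = 0 then 0 else if k = 1 then lam m (r₀ + r) else lam (m + k - 1) r

/-- The glued tableau `t_L # t_R`: places `1,…,n_L` on the left part as in `t_L`, and
places `n_L + t_R(A)` at the node corresponding to each node `A` of the right part. -/
def glueLR (nL c m : ℕ) (tL tR : Node → ℕ) : Node → ℕ := fun A =>
  if A.2.2 < m then nL + tR A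
  else if A.2.2 = m then
    (if A.2.1 ≤ c then tL (A.1, A.2.1, 1) else nL + tR (A.1, A.2.1 - c, m))
  else tL (A.1, A.2.1, A.2.2 - m + 1)

/-- The tableau `t⁺` obtained from a tableau `t` of `μ_R(1,m)` by increasing all entries
by `k`, adjoining a first column with entries `1,…,k` to component `m`, and adjoining
empty components `m+1,…,l`. -/
def addFirstCol (k m : ℕ) (t : Node → ℕ) : Node → ℕ := fun A =>
  if A.2.2 = m then (if A.2.1 = 1 then A.1 else k + t (A.1, A.2.1 - 1, m))
  else k + t A

/-- The tableau `t⁺` obtained from a tableau `t` of `μ_L(d-1,m)` by adjoining empty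
components `1,…,m-1` and adjoining a column `d` to component `m` with entries
`nk+1,…,nk+k` from top to bottom. -/
def addLastCol (nk m d : ℕ) (t : Node → ℕ) : Node → ℕ := fun A =>
  if A.2.2 = m then (if A.2.1 = d then nk + A.1 else t (A.1, A.2.1, 1))
  else t (A.1, A.2.1, A.2.2 - m + 1)

/-- The `i`-th smallest element of a finite set of naturals (1-based). -/
def nthElt (S : Finset ℕ) (i : ℕ) : ℕ := (S.sort (· ≤ ·)).getD (i - 1) 0

/-- The set `S_B` of entries of `t_λ` lying in the bottom region (component `> m`, or
component `m` in a row `> r₀`). -/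
noncomputable def SB (l n : ℕ) (lam : ℕ → ℕ → ℕ) (r₀ m : ℕ) : Finset ℕ :=
  (Finset.Icc 1 n).filter fun i =>
    ∃ A, InDiag lam A ∧ colTab l n lam A = i ∧ (m < A.2.2 ∨ (A.2.2 = m ∧ r₀ < A.1))

/-- The glued tableau `t #̄ s`: on the bottom region the entries are `lab_B ∘ t` and on
the top region they are `lab_T ∘ s`, where `lab_B`, `lab_T` are the order-preserving
bijections onto `S_B`, `S_T`. -/
def glueBT (S_B S_T : Finset ℕ) (r₀ m : ℕ) (tB tT : Node → ℕ) : Node → ℕ := fun A =>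
  if A.2.2 < m then nthElt S_T (tT A)
  else if A.2.2 = m then
    (if A.1 ≤ r₀ then nthElt S_T (tT A) else nthElt S_B (tB (A.1 - r₀, A.2.1, 1)))
  else nthElt S_B (tB (A.1, A.2.1, A.2.2 - m + 1))

/-- The residue of a node `(r, c, m)` with respect to the multicharge `κ`:
`κ_m + c - r` in `ℤ/eℤ` (with `ZMod 0 = ℤ` encoding `e = ∞`). -/
def resNode (e : ℕ) (κ : ℕ → ZMod e) (A : Node) : ZMod e :=
  κ A.2.2 + (A.2.1 : ZMod e) - (A.1 : ZMod e)

section Helpers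
open Finset

lemma parts_anti {p : ℕ → ℕ → ℕ} (h : ∀ m r, 1 ≤ r → p m (r + 1) ≤ p m r)
    (k r s : ℕ) (hr : 1 ≤ r) (hrs : r ≤ s) : p k s ≤ p k r := by
  induction s with
  | zero => exact absurd hrs (by omega)
  | succ s ih =>
    rcases Nat.lt_or_ge r (s + 1) with h1 | h2
    · exact le_trans (h k s (by omega)) (ih (by omega))
    · have : r = s + 1 := by omega
      subst this; exact le_refl _

lemma card_filter_le (a b : ℕ) :
    ((Finset.Icc 1 b).filter fun x => x ≤ a).card = min a b := by
  have h : ((Finset.Icc 1 b).filter fun x => x ≤ a) = Finset.Icc 1 (min a b) := by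
    ext x; simp only [Finset.mem_filter, Finset.mem_Icc, le_min_iff]; omega
  rw [h, Nat.card_Icc]; omega

lemma colLen_sum (n : ℕ) (p : ℕ → ℕ → ℕ) (k c : ℕ) :
    ∑ col ∈ Finset.Icc 1 c, colLen n p k col
      = ∑ r ∈ Finset.Icc 1 n, min (p k r) c := by
  unfold colLen
  simp_rw [Finset.card_filter]
  rw [Finset.sum_comm]
  refine Finset.sum_congr rfl fun r _ => ?_
  rw [← Finset.card_filter, card_filter_le]

lemma le_colLen {p : ℕ → ℕ → ℕ} (h : ∀ m r, 1 ≤ r → p m (r + 1) ≤ p m r)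
    (n k r c' : ℕ) (hr1 : 1 ≤ r) (hrn : r ≤ n) (hc : c' ≤ p k r) :
    r ≤ colLen n p k c' := by
  have hsub : Finset.Icc 1 r ⊆ (Finset.Icc 1 n).filter fun r' => c' ≤ p k r' := by
    intro x hx
    simp only [Finset.mem_Icc] at hx
    simp only [Finset.mem_filter, Finset.mem_Icc]
    exact ⟨⟨hx.1, le_trans hx.2 hrn⟩, le_trans hc (parts_anti h k x r hx.1 hx.2)⟩
  have := Finset.card_le_card hsub
  unfold colLen
  simpa [Nat.card_Icc] using this

lemma colLen_congr {p : ℕ → ℕ → ℕ} (k col n1 n2 : ℕ) (h12 : n1 ≤ n2)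
    (hz : ∀ r, n1 < r → p k r = 0) (hcol : 1 ≤ col) :
    colLen n2 p k col = colLen n1 p k col := by
  unfold colLen
  congr 1
  ext r
  simp only [Finset.mem_filter, Finset.mem_Icc]
  constructor
  · rintro ⟨⟨h1, h2⟩, h3⟩
    refine ⟨⟨h1, ?_⟩, h3⟩
    by_contra hh
    have := hz r (by omega)
    omega
  · rintro ⟨⟨h1, h2⟩, h3⟩
    exact ⟨⟨h1, le_trans h2 h12⟩, h3⟩

lemma compSize_congr {p : ℕ → ℕ → ℕ} (k n1 n2 : ℕ) (h12 : n1 ≤ n2)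
    (hz : ∀ r, n1 < r → p k r = 0) :
    compSize n2 p k = compSize n1 p k := by
  unfold compSize
  refine (Finset.sum_subset (Finset.Icc_subset_Icc_right h12) ?_).symm
  intro x hx hx'
  simp only [Finset.mem_Icc] at hx hx'
  exact hz x (by omega)

lemma rows_vanish {p : ℕ → ℕ → ℕ} (h : ∀ m r, 1 ≤ r → p m (r + 1) ≤ p m r)
    (n k N : ℕ) (hbound : ∑ r ∈ Finset.Icc 1 n, p k r ≤ N)
    (r : ℕ) (hr : N < r) (hrn : r ≤ n) : p k r = 0 := by
  by_contra hh
  have h1 : 1 ≤ p k r := by omega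
  have h2 : ∀ x ∈ Finset.Icc 1 r, 1 ≤ p k x := by
    intro x hx
    simp only [Finset.mem_Icc] at hx
    exact le_trans (le_trans h1 (parts_anti h k x r hx.1 hx.2)) (le_refl _)
  have h3 : r ≤ ∑ x ∈ Finset.Icc 1 r, p k x := by
    calc r = ∑ _x ∈ Finset.Icc 1 r, 1 := by simp [Nat.card_Icc]
    _ ≤ _ := Finset.sum_le_sum h2
  have h4 : (∑ x ∈ Finset.Icc 1 r, p k x) ≤ ∑ x ∈ Finset.Icc 1 n, p k x :=
    Finset.sum_le_sum_of_subset (Finset.Icc_subset_Icc_right hrn)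
  omega

lemma sum_Icc_shift (f : ℕ → ℕ) (a b d : ℕ) :
    ∑ x ∈ Finset.Icc (a + d) (b + d), f x = ∑ x ∈ Finset.Icc a b, f (x + d) := by
  rw [← Finset.map_add_right_Icc, Finset.sum_map]
  rfl

lemma sum_Icc_split (f : ℕ → ℕ) (a b k : ℕ) (h1 : a ≤ k + 1) (h2 : k ≤ b) :
    ∑ x ∈ Finset.Icc a b, f x
      = (∑ x ∈ Finset.Icc a k, f x) + ∑ x ∈ Finset.Icc (k + 1) b, f x := by
  have hu : Finset.Icc a b = Finset.Icc a k ∪ Finset.Icc (k + 1) b := by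
    ext x; simp only [Finset.mem_Icc, Finset.mem_union]; omega
  rw [hu, Finset.sum_union]
  exact Finset.disjoint_left.2 (by
    intro x hx hx'
    simp only [Finset.mem_Icc] at hx hx'
    omega)

end Helpers
section Parts
open Finset
variable {l n c m : ℕ} {p : ℕ → ℕ → ℕ}

lemma leftPart_one (r : ℕ) : leftPart p c m 1 r = min (p m r) c := by simp [leftPart]

lemma leftPart_two (k r : ℕ) (hk : 2 ≤ k) : leftPart p c m k r = p (m + k - 1) r := by
  unfold leftPart
  rw [if_neg (by omega), if_neg (by omega)]

lemma rightPart_lt (k r : ℕ) (hk : k < m) : rightPart p c m k r = p k r := by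
  unfold rightPart; rw [if_pos hk]

lemma rightPart_eq (r : ℕ) : rightPart p c m m r = p m r - c := by
  unfold rightPart; rw [if_neg (lt_irrefl m), if_pos rfl]

lemma leftPart_anti (h : ∀ m r, 1 ≤ r → p m (r + 1) ≤ p m r) :
    ∀ k r, 1 ≤ r → leftPart p c m k (r + 1) ≤ leftPart p c m k r := by
  intro k r hr
  unfold leftPart
  split_ifs with h0 h1
  · exact le_refl _
  · exact min_le_min (h m r hr) (le_refl c)
  · exact h _ r hr

lemma rightPart_anti (h : ∀ m r, 1 ≤ r → p m (r + 1) ≤ p m r) :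
    ∀ k r, 1 ≤ r → rightPart p c m k (r + 1) ≤ rightPart p c m k r := by
  intro k r hr
  unfold rightPart
  split_ifs with h0 h1
  · exact h _ r hr
  · exact Nat.sub_le_sub_right (h m r hr) c
  · exact le_refl _

lemma leftPart_zero (hp : IsMP l n p) (hm2 : m ≤ l) :
    ∀ k r, (k = 0 ∨ (l - m + 1) < k ∨ r = 0 ∨ n < r) → leftPart p c m k r = 0 := by
  intro k r hkr
  unfold leftPart
  split_ifs with h0 h1
  · rfl
  · have : p m r = 0 := hp.1 m r (by omega)
    simp [this]
  · exact hp.1 _ _ (by omega)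

lemma rightPart_zero (hp : IsMP l n p) (hm2 : m ≤ l) :
    ∀ k r, (k = 0 ∨ m < k ∨ r = 0 ∨ n < r) → rightPart p c m k r = 0 := by
  intro k r hkr
  unfold rightPart
  split_ifs with h0 h1
  · exact hp.1 _ _ (by omega)
  · have : p m r = 0 := hp.1 m r (by omega)
    simp [this]
  · rfl

lemma compSize_leftPart_one :
    compSize n (leftPart p c m) 1 = ∑ r ∈ Finset.Icc 1 n, min (p m r) c :=
  Finset.sum_congr rfl fun r _ => leftPart_one r

lemma compSize_leftPart_two (k : ℕ) (hk : 2 ≤ k) :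
    compSize n (leftPart p c m) k = compSize n p (m + k - 1) :=
  Finset.sum_congr rfl fun r _ => leftPart_two k r hk

lemma compSize_rightPart_lt (k : ℕ) (hk : k < m) :
    compSize n (rightPart p c m) k = compSize n p k :=
  Finset.sum_congr rfl fun r _ => rightPart_lt k r hk

lemma compSize_rightPart_eq :
    compSize n (rightPart p c m) m
      = compSize n p m - ∑ r ∈ Finset.Icc 1 n, min (p m r) c := by
  unfold compSize
  have h1 : ∀ r ∈ Finset.Icc 1 n, rightPart p c m m r = p m r - min (p m r) c := by
    intro r _
    rw [rightPart_eq]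
    omega
  rw [Finset.sum_congr rfl h1, Finset.sum_tsub_distrib]
  intro i _
  exact min_le_left _ _

lemma Smin_le : (∑ r ∈ Finset.Icc 1 n, min (p m r) c) ≤ compSize n p m :=
  Finset.sum_le_sum fun r _ => min_le_left _ _

lemma NL_eq (hm1 : 1 ≤ m) (hm2 : m ≤ l) :
    mpSize (l - m + 1) n (leftPart p c m)
      = (∑ r ∈ Finset.Icc 1 n, min (p m r) c)
        + ∑ k ∈ Finset.Icc (m + 1) l, compSize n p k := by
  have h0 : mpSize (l - m + 1) n (leftPart p c m)
      = ∑ k ∈ Finset.Icc 1 (l - m + 1), compSize n (leftPart p c m) k := rfl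
  rw [h0, sum_Icc_split _ 1 (l - m + 1) 1 (by omega) (by omega)]
  have ha : (∑ k ∈ Finset.Icc 1 1, compSize n (leftPart p c m) k)
      = ∑ r ∈ Finset.Icc 1 n, min (p m r) c := by
    rw [Finset.Icc_self, Finset.sum_singleton]
    exact compSize_leftPart_one
  rw [ha]
  congr 1
  refine Finset.sum_nbij' (fun x => x + (m - 1)) (fun x => x - (m - 1)) ?_ ?_ ?_ ?_ ?_
  · intro a ha; simp only [Finset.mem_Icc] at *; omega
  · intro a ha; simp only [Finset.mem_Icc] at *; omega
  · intro a _; omega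
  · intro a ha; simp only [Finset.mem_Icc] at ha; omega
  · intro a ha
    simp only [Finset.mem_Icc] at ha
    rw [compSize_leftPart_two a (by omega)]
    congr 1
    omega

lemma mpSize_right_eq (hm1 : 1 ≤ m) :
    mpSize m n (rightPart p c m)
      = (∑ k ∈ Finset.Icc 1 (m - 1), compSize n p k)
        + (compSize n p m - ∑ r ∈ Finset.Icc 1 n, min (p m r) c) := by
  have h0 : mpSize m n (rightPart p c m)
      = ∑ k ∈ Finset.Icc 1 m, compSize n (rightPart p c m) k := rfl
  rw [h0, sum_Icc_split _ 1 m (m - 1) (by omega) (by omega)]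
  congr 1
  · refine Finset.sum_congr rfl fun k hk => ?_
    simp only [Finset.mem_Icc] at hk
    exact compSize_rightPart_lt k (by omega)
  · have h1 : Finset.Icc (m - 1 + 1) m = Finset.Icc m m := by congr 1; omega
    rw [h1, Finset.Icc_self, Finset.sum_singleton]
    exact compSize_rightPart_eq

lemma mpSize_split (hm1 : 1 ≤ m) (hm2 : m ≤ l) :
    mpSize (l - m + 1) n (leftPart p c m) + mpSize m n (rightPart p c m)
      = mpSize l n p := by
  rw [NL_eq hm1 hm2, mpSize_right_eq hm1]
  have h0 : mpSize l n p = ∑ k ∈ Finset.Icc 1 l, compSize n p k := rfl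
  rw [h0, sum_Icc_split _ 1 l (m - 1) (by omega) (by omega),
    sum_Icc_split _ (m - 1 + 1) l (m) (by omega) (by omega)]
  have h1 : Finset.Icc (m - 1 + 1) m = Finset.Icc m m := by congr 1; omega
  rw [h1, Finset.Icc_self, Finset.sum_singleton]
  have h2 : (∑ r ∈ Finset.Icc 1 n, min (p m r) c) ≤ compSize n p m := Smin_le
  omega

end Parts
section CT
open Finset
variable {l n c m : ℕ} {p : ℕ → ℕ → ℕ}

lemma part_le_n (hp : IsMP l n p) (k r : ℕ) (hk1 : 1 ≤ k) (hk2 : k ≤ l)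
    (hr1 : 1 ≤ r) (hr2 : r ≤ n) : p k r ≤ n := by
  have h1 : p k r ≤ compSize n p k :=
    Finset.single_le_sum (f := fun r => p k r) (fun i _ => Nat.zero_le _)
      (Finset.mem_Icc.2 ⟨hr1, hr2⟩)
  have h2 : compSize n p k ≤ ∑ k' ∈ Finset.Icc 1 l, compSize n p k' :=
    Finset.single_le_sum (fun i _ => Nat.zero_le _) (Finset.mem_Icc.2 ⟨hk1, hk2⟩)
  have h3 : (∑ k' ∈ Finset.Icc 1 l, compSize n p k') = n := hp.2.2
  omega

lemma diag_bounds (hp : IsMP l n p) {r c' k : ℕ} (hd : InDiag p (r, c', k)) :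
    1 ≤ r ∧ r ≤ n ∧ 1 ≤ c' ∧ c' ≤ n ∧ 1 ≤ k ∧ k ≤ l := by
  have h1 : 1 ≤ c' := hd.1
  have h2 : c' ≤ p k r := hd.2
  have hk1 : 1 ≤ k := by by_contra h; have := hp.1 k r (by omega); omega
  have hk2 : k ≤ l := by by_contra h; have := hp.1 k r (by omega); omega
  have hr1 : 1 ≤ r := by by_contra h; have := hp.1 k r (by omega); omega
  have hr2 : r ≤ n := by by_contra h; have := hp.1 k r (by omega); omega
  exact ⟨hr1, hr2, h1, le_trans h2 (part_le_n hp k r hk1 hk2 hr1 hr2), hk1, hk2⟩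

lemma NL_le_n (hp : IsMP l n p) (hm1 : 1 ≤ m) (hm2 : m ≤ l) :
    mpSize (l - m + 1) n (leftPart p c m) ≤ n := by
  have h1 := mpSize_split (p := p) (c := c) (n := n) hm1 hm2
  have h2 : mpSize l n p = n := hp.2.2
  omega

lemma leftPart_rows_vanish (hp : IsMP l n p) (hm1 : 1 ≤ m) (hm2 : m ≤ l) (k r : ℕ)
    (hr : mpSize (l - m + 1) n (leftPart p c m) < r) : leftPart p c m k r = 0 := by
  by_cases hrn : r ≤ n
  · by_cases hk : 1 ≤ k ∧ k ≤ l - m + 1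
    · refine rows_vanish (leftPart_anti hp.2.1) n k _ ?_ r hr hrn
      show compSize n (leftPart p c m) k ≤ mpSize (l - m + 1) n (leftPart p c m)
      unfold mpSize compSize
      exact Finset.single_le_sum
        (f := fun k' => ∑ r ∈ Finset.Icc 1 n, leftPart p c m k' r)
        (fun i _ => Nat.zero_le _) (Finset.mem_Icc.2 ⟨hk.1, hk.2⟩)
    · exact leftPart_zero hp hm2 k r (by omega)
  · exact leftPart_zero hp hm2 k r (by omega)

lemma rightPart_rows_vanish (hp : IsMP l n p) (hm1 : 1 ≤ m) (hm2 : m ≤ l) (k r : ℕ)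
    (hr : n - mpSize (l - m + 1) n (leftPart p c m) < r) : rightPart p c m k r = 0 := by
  have hsplit := mpSize_split (p := p) (c := c) (n := n) hm1 hm2
  have hn : mpSize l n p = n := hp.2.2
  by_cases hrn : r ≤ n
  · by_cases hk : 1 ≤ k ∧ k ≤ m
    · refine rows_vanish (rightPart_anti hp.2.1) n k (mpSize m n (rightPart p c m)) ?_ r ?_ hrn
      · show compSize n (rightPart p c m) k ≤ mpSize m n (rightPart p c m)
        unfold mpSize compSize
        exact Finset.single_le_sum
          (f := fun k' => ∑ r ∈ Finset.Icc 1 n, rightPart p c m k' r)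
          (fun i _ => Nat.zero_le _) (Finset.mem_Icc.2 ⟨hk.1, hk.2⟩)
      · omega
    · exact rightPart_zero hp hm2 k r (by omega)
  · exact rightPart_zero hp hm2 k r (by omega)

lemma colLen_leftPart_one (col : ℕ) (hcol : col ≤ c) :
    colLen n (leftPart p c m) 1 col = colLen n p m col := by
  unfold colLen
  congr 1
  ext r
  simp only [Finset.mem_filter, Finset.mem_Icc, leftPart_one]
  omega

lemma colLen_leftPart_two (k col : ℕ) (hk : 2 ≤ k) :
    colLen n (leftPart p c m) k col = colLen n p (m + k - 1) col := by
  unfold colLen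
  have h : ∀ r, leftPart p c m k r = p (m + k - 1) r := fun r => leftPart_two k r hk
  simp only [h]

lemma colLen_rightPart_lt (k col : ℕ) (hk : k < m) :
    colLen n (rightPart p c m) k col = colLen n p k col := by
  unfold colLen
  have h : ∀ r, rightPart p c m k r = p k r := fun r => rightPart_lt k r hk
  simp only [h]

lemma colLen_rightPart_shift (col : ℕ) (hcol : 1 ≤ col) :
    colLen n (rightPart p c m) m col = colLen n p m (col + c) := by
  unfold colLen
  congr 1
  ext r
  simp only [Finset.mem_filter, Finset.mem_Icc, rightPart_eq]
  omega

lemma colTab_left (hp : IsMP l n p) (hm1 : 1 ≤ m) (hm2 : m ≤ l)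
    (r c' k : ℕ) (hk : m ≤ k) (hd : InDiag p (r, c', k)) (hc : k = m → c' ≤ c) :
    colTab (l - m + 1) (mpSize (l - m + 1) n (leftPart p c m)) (leftPart p c m)
      (r, c', k - m + 1) = colTab l n p (r, c', k) := by
  obtain ⟨hr1, hr2, hc1, hc2, hk1, hk2⟩ := diag_bounds hp hd
  have hNLn : mpSize (l - m + 1) n (leftPart p c m) ≤ n := NL_le_n hp hm1 hm2
  unfold colTab
  dsimp only
  have e1 : ∀ m' ∈ Finset.Icc (k - m + 1 + 1) (l - m + 1),
      compSize (mpSize (l - m + 1) n (leftPart p c m)) (leftPart p c m) m'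
        = compSize n (leftPart p c m) m' := by
    intro m' _
    exact (compSize_congr m' _ n hNLn
      (fun r hr => leftPart_rows_vanish hp hm1 hm2 m' r hr)).symm
  rw [Finset.sum_congr rfl e1]
  have e2 : ∀ col ∈ Finset.Icc 1 (c' - 1),
      colLen (mpSize (l - m + 1) n (leftPart p c m)) (leftPart p c m) (k - m + 1) col
        = colLen n (leftPart p c m) (k - m + 1) col := by
    intro col hcol
    simp only [Finset.mem_Icc] at hcol
    exact (colLen_congr _ col _ n hNLn
      (fun r hr => leftPart_rows_vanish hp hm1 hm2 _ r hr) hcol.1).symm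
  rw [Finset.sum_congr rfl e2]
  have eS : (∑ m' ∈ Finset.Icc (k - m + 1 + 1) (l - m + 1), compSize n (leftPart p c m) m')
      = ∑ m' ∈ Finset.Icc (k + 1) l, compSize n p m' := by
    refine Finset.sum_nbij' (fun x => x + (m - 1)) (fun x => x - (m - 1)) ?_ ?_ ?_ ?_ ?_
    · intro a ha; simp only [Finset.mem_Icc] at *; omega
    · intro a ha; simp only [Finset.mem_Icc] at *; omega
    · intro a _; omega
    · intro a ha; simp only [Finset.mem_Icc] at ha; omega
    · intro a ha
      simp only [Finset.mem_Icc] at ha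
      rw [compSize_leftPart_two a (by omega)]
      congr 1
      omega
  have eC : ∀ col ∈ Finset.Icc 1 (c' - 1),
      colLen n (leftPart p c m) (k - m + 1) col = colLen n p k col := by
    intro col hcol
    simp only [Finset.mem_Icc] at hcol
    rcases Nat.lt_or_ge m k with h | h
    · rw [colLen_leftPart_two (k - m + 1) col (by omega)]
      congr 1
      omega
    · have hkm : k = m := by omega
      have h11 : k - m + 1 = 1 := by omega
      rw [h11, colLen_leftPart_one col (by omega)]
      rw [hkm]
  rw [eS, Finset.sum_congr rfl eC]

lemma colTab_right_lt (hp : IsMP l n p) (hm1 : 1 ≤ m) (hm2 : m ≤ l)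
    (r c' k : ℕ) (hk : k < m) (hd : InDiag p (r, c', k)) :
    mpSize (l - m + 1) n (leftPart p c m)
      + colTab m (n - mpSize (l - m + 1) n (leftPart p c m)) (rightPart p c m) (r, c', k)
      = colTab l n p (r, c', k) := by
  obtain ⟨hr1, hr2, hc1, hc2, hk1, hk2⟩ := diag_bounds hp hd
  unfold colTab
  dsimp only
  have e1 : ∀ m' ∈ Finset.Icc (k + 1) m,
      compSize (n - mpSize (l - m + 1) n (leftPart p c m)) (rightPart p c m) m'
        = compSize n (rightPart p c m) m' := by
    intro m' _
    exact (compSize_congr m' _ n (by omega)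
      (fun r hr => rightPart_rows_vanish hp hm1 hm2 m' r hr)).symm
  rw [Finset.sum_congr rfl e1]
  have e2 : ∀ col ∈ Finset.Icc 1 (c' - 1),
      colLen (n - mpSize (l - m + 1) n (leftPart p c m)) (rightPart p c m) k col
        = colLen n p k col := by
    intro col hcol
    simp only [Finset.mem_Icc] at hcol
    have hcg := colLen_congr (p := rightPart p c m) k col
      (n - mpSize (l - m + 1) n (leftPart p c m)) n (by omega)
      (fun r hr => rightPart_rows_vanish hp hm1 hm2 _ r hr) hcol.1
    rw [← hcg]
    exact colLen_rightPart_lt k col hk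
  rw [Finset.sum_congr rfl e2]
  have eS : (∑ m' ∈ Finset.Icc (k + 1) m, compSize n (rightPart p c m) m')
      = (∑ m' ∈ Finset.Icc (k + 1) (m - 1), compSize n p m')
        + (compSize n p m - ∑ r ∈ Finset.Icc 1 n, min (p m r) c) := by
    rw [sum_Icc_split _ (k + 1) m (m - 1) (by omega) (by omega)]
    have h1 : Finset.Icc (m - 1 + 1) m = Finset.Icc m m := by congr 1; omega
    rw [h1, Finset.Icc_self, Finset.sum_singleton, compSize_rightPart_eq]
    congr 1
    refine Finset.sum_congr rfl fun k' hk' => ?_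
    simp only [Finset.mem_Icc] at hk'
    exact compSize_rightPart_lt k' (by omega)
  rw [eS]
  have eR : (∑ m' ∈ Finset.Icc (k + 1) l, compSize n p m')
      = (∑ m' ∈ Finset.Icc (k + 1) (m - 1), compSize n p m')
        + compSize n p m + ∑ m' ∈ Finset.Icc (m + 1) l, compSize n p m' := by
    rw [sum_Icc_split _ (k + 1) l (m - 1) (by omega) (by omega),
      sum_Icc_split _ (m - 1 + 1) l m (by omega) (by omega)]
    have h1 : Finset.Icc (m - 1 + 1) m = Finset.Icc m m := by congr 1; omega
    rw [h1, Finset.Icc_self, Finset.sum_singleton]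
    omega
  rw [eR, NL_eq hm1 hm2]
  have hS : (∑ r ∈ Finset.Icc 1 n, min (p m r) c) ≤ compSize n p m := Smin_le
  have heta : (Finset.Icc 1 (c' - 1)).sum (colLen n p k)
      = ∑ col ∈ Finset.Icc 1 (c' - 1), colLen n p k col := rfl
  rw [heta]
  omega

lemma colTab_right_eq (hp : IsMP l n p) (hm1 : 1 ≤ m) (hm2 : m ≤ l)
    (r c' : ℕ) (hd : InDiag p (r, c', m)) (hc : c < c') :
    mpSize (l - m + 1) n (leftPart p c m)
      + colTab m (n - mpSize (l - m + 1) n (leftPart p c m)) (rightPart p c m)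
          (r, c' - c, m)
      = colTab l n p (r, c', m) := by
  obtain ⟨hr1, hr2, hc1, hc2, hk1, hk2⟩ := diag_bounds hp hd
  unfold colTab
  dsimp only
  have hE : Finset.Icc (m + 1) m = ∅ := Finset.Icc_eq_empty (by omega)
  rw [hE, Finset.sum_empty]
  have e2 : ∀ col ∈ Finset.Icc 1 (c' - c - 1),
      colLen (n - mpSize (l - m + 1) n (leftPart p c m)) (rightPart p c m) m col
        = colLen n p m (col + c) := by
    intro col hcol
    simp only [Finset.mem_Icc] at hcol
    have hcg := colLen_congr (p := rightPart p c m) m col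
      (n - mpSize (l - m + 1) n (leftPart p c m)) n (by omega)
      (fun r hr => rightPart_rows_vanish hp hm1 hm2 _ r hr) hcol.1
    rw [← hcg]
    exact colLen_rightPart_shift col hcol.1
  rw [Finset.sum_congr rfl e2]
  have eshift : (∑ col ∈ Finset.Icc 1 (c' - c - 1), colLen n p m (col + c))
      = ∑ col ∈ Finset.Icc (c + 1) (c' - 1), colLen n p m col := by
    refine Finset.sum_nbij' (fun x => x + c) (fun x => x - c) ?_ ?_ ?_ ?_ ?_
    · intro a ha; simp only [Finset.mem_Icc] at *; omega
    · intro a ha; simp only [Finset.mem_Icc] at *; omega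
    · intro a _; omega
    · intro a ha; simp only [Finset.mem_Icc] at ha; omega
    · intro a _; dsimp only
  rw [eshift]
  have eR : (∑ col ∈ Finset.Icc 1 (c' - 1), colLen n p m col)
      = (∑ col ∈ Finset.Icc 1 c, colLen n p m col)
        + ∑ col ∈ Finset.Icc (c + 1) (c' - 1), colLen n p m col :=
    sum_Icc_split _ 1 (c' - 1) c (by omega) (by omega)
  rw [eR, NL_eq hm1 hm2, colLen_sum]
  have heta : (Finset.Icc (c + 1) (c' - 1)).sum (colLen n p m)
      = ∑ col ∈ Finset.Icc (c + 1) (c' - 1), colLen n p m col := rfl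
  rw [heta]
  omega

lemma colTab_le_iff (hp : IsMP l n p) (hm1 : 1 ≤ m) (hm2 : m ≤ l)
    (r c' k : ℕ) (hd : InDiag p (r, c', k)) :
    colTab l n p (r, c', k) ≤ mpSize (l - m + 1) n (leftPart p c m)
      ↔ (m < k ∨ (k = m ∧ c' ≤ c)) := by
  obtain ⟨hr1, hr2, hc1, hc2, hk1, hk2⟩ := diag_bounds hp hd
  have hct : colTab l n p (r, c', k)
      = (∑ m' ∈ Finset.Icc (k + 1) l, compSize n p m')
        + (∑ col ∈ Finset.Icc 1 (c' - 1), colLen n p k col) + r := rfl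
  have hCr : (∑ col ∈ Finset.Icc 1 (c' - 1), colLen n p k col) + r
      ≤ ∑ col ∈ Finset.Icc 1 c', colLen n p k col := by
    rw [sum_Icc_split _ 1 c' (c' - 1) (by omega) (by omega)]
    have h1 : Finset.Icc (c' - 1 + 1) c' = Finset.Icc c' c' := by congr 1; omega
    rw [h1, Finset.Icc_self, Finset.sum_singleton]
    have := le_colLen hp.2.1 n k r c' hr1 hr2 hd.2
    omega
  have hCc : ∀ K C, (∑ col ∈ Finset.Icc 1 C, colLen n p K col) ≤ compSize n p K := by
    intro K C
    rw [colLen_sum]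
    exact Finset.sum_le_sum fun r _ => min_le_left _ _
  have hCmono : ∀ K C1 C2 : ℕ, C1 ≤ C2 →
      (∑ col ∈ Finset.Icc 1 C1, colLen n p K col)
        ≤ ∑ col ∈ Finset.Icc 1 C2, colLen n p K col :=
    fun K C1 C2 h => Finset.sum_le_sum_of_subset (Finset.Icc_subset_Icc_right h)
  have hSmono : ∀ j1 j2 : ℕ, j1 ≤ j2 →
      (∑ m' ∈ Finset.Icc j2 l, compSize n p m')
        ≤ ∑ m' ∈ Finset.Icc j1 l, compSize n p m' :=
    fun j1 j2 h => Finset.sum_le_sum_of_subset (Finset.Icc_subset_Icc_left h)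
  have hNL : mpSize (l - m + 1) n (leftPart p c m)
      = (∑ col ∈ Finset.Icc 1 c, colLen n p m col)
        + ∑ m' ∈ Finset.Icc (m + 1) l, compSize n p m' := by
    rw [NL_eq hm1 hm2, colLen_sum]
  constructor
  · intro h
    by_contra hnot
    push_neg at hnot
    rcases Nat.lt_or_ge k m with hkm | hkm
    · -- k < m
      have hS1 : (∑ m' ∈ Finset.Icc m l, compSize n p m')
          ≤ ∑ m' ∈ Finset.Icc (k + 1) l, compSize n p m' := hSmono _ _ (by omega)
      have hS2 : (∑ m' ∈ Finset.Icc m l, compSize n p m')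
          = compSize n p m + ∑ m' ∈ Finset.Icc (m + 1) l, compSize n p m' := by
        rw [sum_Icc_split _ m l m (by omega) (by omega), Finset.Icc_self,
          Finset.sum_singleton]
      have h4 : (∑ col ∈ Finset.Icc 1 c, colLen n p m col) ≤ compSize n p m := by
        have : (∑ col ∈ Finset.Icc 1 c, colLen n p m col)
            = ∑ r ∈ Finset.Icc 1 n, min (p m r) c := colLen_sum n p m c
        rw [this]
        exact Smin_le
      omega
    · -- k = m and c < c'
      have hkm' : k = m := by omega
      have hcc : c < c' := hnot.2 hkm'
      rw [hkm'] at h hct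
      have h5 : (∑ col ∈ Finset.Icc 1 c, colLen n p m col)
          ≤ ∑ col ∈ Finset.Icc 1 (c' - 1), colLen n p m col := hCmono m _ _ (by omega)
      omega
  · intro h
    rcases h with h | ⟨h1, h2⟩
    · -- m < k
      have hS1 : (∑ m' ∈ Finset.Icc (k + 1) l, compSize n p m') + compSize n p k
          = ∑ m' ∈ Finset.Icc k l, compSize n p m' := by
        rw [sum_Icc_split _ k l k (by omega) (by omega), Finset.Icc_self,
          Finset.sum_singleton]
        omega
      have hS2 : (∑ m' ∈ Finset.Icc k l, compSize n p m')
          ≤ ∑ m' ∈ Finset.Icc (m + 1) l, compSize n p m' := hSmono _ _ (by omega)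
      have h3 := hCc k c'
      omega
    · -- k = m, c' ≤ c
      rw [h1] at hct hCr ⊢
      have h5 : (∑ col ∈ Finset.Icc 1 c', colLen n p m col)
          ≤ ∑ col ∈ Finset.Icc 1 c, colLen n p m col := hCmono m _ _ h2
      omega

end CT
section Count
open Finset
variable {l n c m : ℕ} {p : ℕ → ℕ → ℕ}

/-- The bounding box for diagrams. -/
def box (l n : ℕ) : Finset Node :=
  (Finset.Icc 1 n) ×ˢ (Finset.Icc 1 n) ×ˢ (Finset.Icc 1 l)

lemma mem_box_iff (A : Node) : A ∈ box l n ↔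
    (1 ≤ A.1 ∧ A.1 ≤ n) ∧ (1 ≤ A.2.1 ∧ A.2.1 ≤ n) ∧ (1 ≤ A.2.2 ∧ A.2.2 ≤ l) := by
  unfold box
  simp [Finset.mem_product, Finset.mem_Icc]

lemma mem_box (hp : IsMP l n p) {A : Node} (hd : InDiag p A) : A ∈ box l n := by
  obtain ⟨r, cc, k⟩ := A
  obtain ⟨h1, h2, h3, h4, h5, h6⟩ := diag_bounds hp hd
  rw [mem_box_iff]
  exact ⟨⟨h1, h2⟩, ⟨h3, h4⟩, ⟨h5, h6⟩⟩

lemma left_card (hp : IsMP l n p) (hm1 : 1 ≤ m) (hm2 : m ≤ l) :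
    (((box l n)).filter fun A : Node =>
        InDiag p A ∧ (m < A.2.2 ∨ (A.2.2 = m ∧ A.2.1 ≤ c))).card
      = mpSize (l - m + 1) n (leftPart p c m) := by
  classical
  rw [NL_eq hm1 hm2]
  rw [Finset.card_filter]
  unfold box
  rw [Finset.sum_product]
  simp_rw [Finset.sum_product]
  have swap : ∀ r ∈ Finset.Icc 1 n,
      (∑ c' ∈ Finset.Icc 1 n, ∑ k ∈ Finset.Icc 1 l,
        (if InDiag p (r, c', k) ∧ (m < k ∨ (k = m ∧ c' ≤ c)) then 1 else 0))
      = ∑ k ∈ Finset.Icc 1 l, ∑ c' ∈ Finset.Icc 1 n,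
        (if InDiag p (r, c', k) ∧ (m < k ∨ (k = m ∧ c' ≤ c)) then 1 else 0) :=
    fun r _ => Finset.sum_comm
  rw [Finset.sum_congr rfl swap, Finset.sum_comm]
  have inner : ∀ k ∈ Finset.Icc 1 l, ∀ r ∈ Finset.Icc 1 n,
      (∑ c' ∈ Finset.Icc 1 n,
        (if InDiag p (r, c', k) ∧ (m < k ∨ (k = m ∧ c' ≤ c)) then 1 else 0))
      = (if m < k then p k r else if k = m then min (p k r) c else 0) := by
    intro k hk r hr
    simp only [Finset.mem_Icc] at hk hr
    have hple : p k r ≤ n := part_le_n hp k r hk.1 hk.2 hr.1 hr.2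
    rw [← Finset.card_filter]
    rcases Nat.lt_trichotomy m k with h | h | h
    · rw [if_pos h]
      have : ((Finset.Icc 1 n).filter fun c' =>
          InDiag p (r, c', k) ∧ (m < k ∨ (k = m ∧ c' ≤ c))) = Finset.Icc 1 (p k r) := by
        ext x
        rw [Finset.mem_filter]
        simp only [Finset.mem_filter, Finset.mem_Icc, InDiag]
        omega
      rw [this, Nat.card_Icc]
      omega
    · rw [if_neg (by omega), if_pos h.symm]
      have : ((Finset.Icc 1 n).filter fun c' =>
          InDiag p (r, c', k) ∧ (m < k ∨ (k = m ∧ c' ≤ c)))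
          = Finset.Icc 1 (min (p k r) c) := by
        ext x
        rw [Finset.mem_filter]
        simp only [Finset.mem_filter, Finset.mem_Icc, InDiag]
        omega
      rw [this, Nat.card_Icc]
      omega
    · rw [if_neg (by omega), if_neg (by omega)]
      have : ((Finset.Icc 1 n).filter fun c' =>
          InDiag p (r, c', k) ∧ (m < k ∨ (k = m ∧ c' ≤ c))) = ∅ := by
        ext x
        rw [Finset.mem_filter]
        simp only [Finset.mem_filter, Finset.mem_Icc, InDiag, Finset.notMem_empty,
          iff_false]
        omega
      rw [this]
      rfl
  have step : ∀ k ∈ Finset.Icc 1 l,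
      (∑ r ∈ Finset.Icc 1 n,
        ∑ c' ∈ Finset.Icc 1 n,
          (if InDiag p (r, c', k) ∧ (m < k ∨ (k = m ∧ c' ≤ c)) then 1 else 0))
      = ∑ r ∈ Finset.Icc 1 n,
          (if m < k then p k r else if k = m then min (p k r) c else 0) :=
    fun k hk => Finset.sum_congr rfl (inner k hk)
  rw [Finset.sum_congr rfl step]
  rw [sum_Icc_split _ 1 l (m - 1) (by omega) (by omega),
    sum_Icc_split _ (m - 1 + 1) l m (by omega) (by omega)]
  have h1 : Finset.Icc (m - 1 + 1) m = Finset.Icc m m := by congr 1; omega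
  rw [h1, Finset.Icc_self, Finset.sum_singleton]
  have e1 : (∑ k ∈ Finset.Icc 1 (m - 1), ∑ r ∈ Finset.Icc 1 n,
      (if m < k then p k r else if k = m then min (p k r) c else 0)) = 0 := by
    refine Finset.sum_eq_zero fun k hk => Finset.sum_eq_zero fun r _ => ?_
    simp only [Finset.mem_Icc] at hk
    rw [if_neg (by omega), if_neg (by omega)]
  have e2 : (∑ r ∈ Finset.Icc 1 n,
      (if m < m then p m r else if m = m then min (p m r) c else 0))
      = ∑ r ∈ Finset.Icc 1 n, min (p m r) c := by
    refine Finset.sum_congr rfl fun r _ => ?_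
    rw [if_neg (by omega), if_pos rfl]
  have e3 : (∑ k ∈ Finset.Icc (m + 1) l, ∑ r ∈ Finset.Icc 1 n,
      (if m < k then p k r else if k = m then min (p k r) c else 0))
      = ∑ k ∈ Finset.Icc (m + 1) l, compSize n p k := by
    refine Finset.sum_congr rfl fun k hk => ?_
    simp only [Finset.mem_Icc] at hk
    refine Finset.sum_congr rfl fun r _ => ?_
    rw [if_pos (by omega)]
  rw [e1, e2, e3]
  omega

lemma diag_card (hp : IsMP l n p) (hl : 1 ≤ l) :
    ((box l n).filter fun A : Node => InDiag p A).card = n := by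
  have h1 : ((box l n).filter fun A : Node => InDiag p A)
      = (box l n).filter fun A : Node =>
          InDiag p A ∧ (1 < A.2.2 ∨ (A.2.2 = 1 ∧ A.2.1 ≤ n)) := by
    ext A
    simp only [Finset.mem_filter, mem_box_iff]
    constructor
    · rintro ⟨hb, hd⟩
      exact ⟨hb, hd, by omega⟩
    · rintro ⟨hb, hd, _⟩
      exact ⟨hb, hd⟩
  rw [h1, left_card hp (le_refl 1) hl, NL_eq (le_refl 1) hl]
  have e1 : (∑ r ∈ Finset.Icc 1 n, min (p 1 r) n) = compSize n p 1 := by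
    refine Finset.sum_congr rfl fun r hr => ?_
    simp only [Finset.mem_Icc] at hr
    have := part_le_n hp 1 r (le_refl 1) hl hr.1 hr.2
    omega
  rw [e1]
  have e2 : compSize n p 1 + (∑ k ∈ Finset.Icc (1 + 1) l, compSize n p k)
      = ∑ k ∈ Finset.Icc 1 l, compSize n p k := by
    rw [sum_Icc_split _ 1 l 1 (by omega) (by omega), Finset.Icc_self,
      Finset.sum_singleton]
  rw [e2]
  exact hp.2.2

lemma colTab_eq (r c' k : ℕ) : colTab l n p (r, c', k)
    = (∑ m' ∈ Finset.Icc (k + 1) l, compSize n p m')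
      + (∑ col ∈ Finset.Icc 1 (c' - 1), colLen n p k col) + r := rfl

lemma colSum_le (K C : ℕ) :
    (∑ col ∈ Finset.Icc 1 C, colLen n p K col) ≤ compSize n p K := by
  rw [colLen_sum]
  exact Finset.sum_le_sum fun r _ => min_le_left _ _

lemma colTab_ub (hp : IsMP l n p) {r c' k : ℕ} (hd : InDiag p (r, c', k)) :
    colTab l n p (r, c', k)
      ≤ (∑ m' ∈ Finset.Icc (k + 1) l, compSize n p m')
        + ∑ col ∈ Finset.Icc 1 c', colLen n p k col := by
  obtain ⟨hr1, hr2, hc1, _, _, _⟩ := diag_bounds hp hd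
  rw [colTab_eq, sum_Icc_split _ 1 c' (c' - 1) (by omega) (by omega)]
  have h1 : Finset.Icc (c' - 1 + 1) c' = Finset.Icc c' c' := by congr 1; omega
  rw [h1, Finset.Icc_self, Finset.sum_singleton]
  have := le_colLen hp.2.1 n k r c' hr1 hr2 hd.2
  omega

lemma colTab_ub' (hp : IsMP l n p) {r c' k : ℕ} (hd : InDiag p (r, c', k)) :
    colTab l n p (r, c', k) ≤ ∑ m' ∈ Finset.Icc k l, compSize n p m' := by
  obtain ⟨_, _, _, _, hk1, hk2⟩ := diag_bounds hp hd
  have h1 := colTab_ub hp hd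
  have h2 := colSum_le (p := p) (n := n) k c'
  have h3 : (∑ m' ∈ Finset.Icc k l, compSize n p m')
      = compSize n p k + ∑ m' ∈ Finset.Icc (k + 1) l, compSize n p m' := by
    rw [sum_Icc_split _ k l k (by omega) hk2, Finset.Icc_self, Finset.sum_singleton]
  omega

lemma colTab_mem (hp : IsMP l n p) {r c' k : ℕ} (hd : InDiag p (r, c', k)) :
    1 ≤ colTab l n p (r, c', k) ∧ colTab l n p (r, c', k) ≤ n := by
  obtain ⟨hr1, _, _, _, hk1, _⟩ := diag_bounds hp hd
  constructor
  · rw [colTab_eq]; omega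
  · have h1 := colTab_ub' hp hd
    have h2 : (∑ m' ∈ Finset.Icc k l, compSize n p m')
        ≤ ∑ m' ∈ Finset.Icc 1 l, compSize n p m' :=
      Finset.sum_le_sum_of_subset (Finset.Icc_subset_Icc_left hk1)
    have h3 : (∑ m' ∈ Finset.Icc 1 l, compSize n p m') = n := hp.2.2
    omega

lemma colTab_inj (hp : IsMP l n p) :
    ∀ r1 c1 k1 r2 c2 k2, InDiag p (r1, c1, k1) → InDiag p (r2, c2, k2) →
      colTab l n p (r1, c1, k1) = colTab l n p (r2, c2, k2) →
      r1 = r2 ∧ c1 = c2 ∧ k1 = k2 := by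
  have hkey : ∀ r1 c1 k1 r2 c2 k2, InDiag p (r1, c1, k1) → InDiag p (r2, c2, k2) →
      colTab l n p (r1, c1, k1) = colTab l n p (r2, c2, k2) → k1 < k2 → False := by
    intro r1 c1 k1 r2 c2 k2 h1 h2 he hk
    have u2 := colTab_ub' hp h2
    have l1 : (∑ m' ∈ Finset.Icc (k1 + 1) l, compSize n p m') < colTab l n p (r1, c1, k1) := by
      have hr1 : 1 ≤ r1 := (diag_bounds hp h1).1
      rw [colTab_eq]; omega
    have hS : (∑ m' ∈ Finset.Icc k2 l, compSize n p m')
        ≤ ∑ m' ∈ Finset.Icc (k1 + 1) l, compSize n p m' :=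
      Finset.sum_le_sum_of_subset (Finset.Icc_subset_Icc_left (by omega))
    omega
  have hkey2 : ∀ r1 c1 r2 c2 k, InDiag p (r1, c1, k) → InDiag p (r2, c2, k) →
      colTab l n p (r1, c1, k) = colTab l n p (r2, c2, k) → c1 < c2 → False := by
    intro r1 c1 r2 c2 k h1 h2 he hc
    have u1 := colTab_ub hp h1
    have l2 : (∑ m' ∈ Finset.Icc (k + 1) l, compSize n p m')
        + (∑ col ∈ Finset.Icc 1 (c2 - 1), colLen n p k col)
        < colTab l n p (r2, c2, k) := by
      have hr2 : 1 ≤ r2 := (diag_bounds hp h2).1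
      rw [colTab_eq]; omega
    have hC : (∑ col ∈ Finset.Icc 1 c1, colLen n p k col)
        ≤ ∑ col ∈ Finset.Icc 1 (c2 - 1), colLen n p k col :=
      Finset.sum_le_sum_of_subset (Finset.Icc_subset_Icc_right (by omega))
    omega
  intro r1 c1 k1 r2 c2 k2 h1 h2 he
  have hk : k1 = k2 := by
    rcases Nat.lt_trichotomy k1 k2 with h | h | h
    · exact absurd (hkey r1 c1 k1 r2 c2 k2 h1 h2 he h) (fun x => x)
    · exact h
    · exact absurd (hkey r2 c2 k2 r1 c1 k1 h2 h1 he.symm h) (fun x => x)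
  subst hk
  have hc : c1 = c2 := by
    rcases Nat.lt_trichotomy c1 c2 with h | h | h
    · exact absurd (hkey2 r1 c1 r2 c2 k1 h1 h2 he h) (fun x => x)
    · exact h
    · exact absurd (hkey2 r2 c2 r1 c1 k1 h2 h1 he.symm h) (fun x => x)
  subst hc
  refine ⟨?_, rfl, rfl⟩
  rw [colTab_eq, colTab_eq] at he
  omega

lemma colTab_surj (hp : IsMP l n p) (hl : 1 ≤ l) :
    ∀ i, 1 ≤ i → i ≤ n → ∃ A : Node, InDiag p A ∧ colTab l n p A = i := by
  classical
  intro i hi1 hi2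
  set D := (box l n).filter fun A : Node => InDiag p A with hD
  have hinj : Set.InjOn (colTab l n p) D := by
    intro A hA B hB he
    simp only [hD, Finset.coe_filter, Set.mem_setOf_eq] at hA hB
    obtain ⟨r1, c1, k1⟩ := A
    obtain ⟨r2, c2, k2⟩ := B
    obtain ⟨hr, hc, hk⟩ := colTab_inj hp r1 c1 k1 r2 c2 k2 hA.2 hB.2 he
    simp [hr, hc, hk]
  have hcard : (D.image (colTab l n p)).card = n := by
    rw [Finset.card_image_of_injOn hinj, hD, diag_card hp hl]
  have hsub : D.image (colTab l n p) ⊆ Finset.Icc 1 n := by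
    intro x hx
    simp only [Finset.mem_image] at hx
    obtain ⟨A, hA, hAx⟩ := hx
    simp only [hD, Finset.mem_filter] at hA
    obtain ⟨r1, c1, k1⟩ := A
    have := colTab_mem hp hA.2
    simp only [Finset.mem_Icc]
    omega
  have heq : D.image (colTab l n p) = Finset.Icc 1 n := by
    apply Finset.eq_of_subset_of_card_le hsub
    rw [hcard, Nat.card_Icc]
    omega
  have : i ∈ D.image (colTab l n p) := by
    rw [heq]; exact Finset.mem_Icc.2 ⟨hi1, hi2⟩
  simp only [Finset.mem_image, hD, Finset.mem_filter] at this
  obtain ⟨A, ⟨_, hA⟩, hAi⟩ := this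
  exact ⟨A, hA, hAi⟩

end Count
section Transfer
open Finset
variable {l n c m : ℕ} {p : ℕ → ℕ → ℕ} {r c' k k' : ℕ}

lemma weaklyLeft_mk (r1 c1 k1 r2 c2 k2 : ℕ) :
    WeaklyLeft (r1, c1, k1) (r2, c2, k2) ↔ (k2 < k1 ∨ (k1 = k2 ∧ c1 ≤ c2)) := Iff.rfl

lemma inDiag_mk (q : ℕ → ℕ → ℕ) (r c' k : ℕ) :
    InDiag q (r, c', k) ↔ 1 ≤ c' ∧ c' ≤ q k r := Iff.rfl

lemma inDiag_leftPart_of (hd : InDiag p (r, c', k)) (hk : m ≤ k) (hc : k = m → c' ≤ c) :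
    InDiag (leftPart p c m) (r, c', k - m + 1) := by
  rw [inDiag_mk] at hd ⊢
  rcases Nat.eq_or_lt_of_le hk with h | h
  · have h1 : k - m + 1 = 1 := by omega
    rw [h1, leftPart_one]
    have h2 := hc h.symm
    have h3 : p m r = p k r := by rw [h]
    omega
  · rw [leftPart_two _ _ (by omega)]
    have h2 : m + (k - m + 1) - 1 = k := by omega
    rw [h2]
    exact hd

lemma inDiag_of_leftPart (hm1 : 1 ≤ m) (hd : InDiag (leftPart p c m) (r, c', k')) :
    1 ≤ k' ∧ InDiag p (r, c', k' + m - 1) ∧ (k' = 1 → c' ≤ c) := by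
  rw [inDiag_mk] at hd
  by_cases h0 : k' = 0
  · subst h0
    rw [show leftPart p c m 0 r = 0 from by simp [leftPart]] at hd
    omega
  by_cases h1 : k' = 1
  · subst h1
    rw [leftPart_one] at hd
    refine ⟨le_refl 1, ?_, fun _ => by omega⟩
    rw [show 1 + m - 1 = m from by omega, inDiag_mk]
    omega
  · rw [leftPart_two _ _ (by omega)] at hd
    refine ⟨by omega, ?_, fun h => absurd h h1⟩
    rw [inDiag_mk, show k' + m - 1 = m + k' - 1 from by omega]
    exact hd

lemma inDiag_rightPart_of_lt (hd : InDiag p (r, c', k)) (hk : k < m) :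
    InDiag (rightPart p c m) (r, c', k) := by
  rw [inDiag_mk] at hd ⊢
  rw [rightPart_lt _ _ hk]
  exact hd

lemma inDiag_rightPart_of_eq (hd : InDiag p (r, c', m)) (hc : c < c') :
    InDiag (rightPart p c m) (r, c' - c, m) := by
  rw [inDiag_mk] at hd ⊢
  rw [rightPart_eq]
  omega

lemma inDiag_of_rightPart (hd : InDiag (rightPart p c m) (r, c', k)) :
    (k < m ∧ InDiag p (r, c', k)) ∨ (k = m ∧ c < c' + c ∧ InDiag p (r, c' + c, m)) := by
  rw [inDiag_mk] at hd
  by_cases h1 : k < m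
  · left
    refine ⟨h1, ?_⟩
    rw [rightPart_lt _ _ h1] at hd
    exact hd
  by_cases h2 : k = m
  · right
    subst h2
    rw [rightPart_eq] at hd
    exact ⟨rfl, by omega, by rw [inDiag_mk]; omega⟩
  · exfalso
    have h3 : rightPart p c m k r = 0 := by
      unfold rightPart
      rw [if_neg h1, if_neg h2]
    omega

end Transfer
section Bwd
open Finset

lemma bwd (l n : ℕ) (hl : 1 ≤ l) (hn : 1 ≤ n)
    (c m : ℕ) (hm1 : 1 ≤ m) (hm2 : m ≤ l)
    (lam mu : ℕ → ℕ → ℕ) (hlam : IsMP l n lam) (hmu : IsMP l n mu)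
    (nL : ℕ) (hnL : nL = mpSize (l - m + 1) n (leftPart lam c m))
    (heq : mpSize (l - m + 1) n (leftPart mu c m) = nL)
    (t tL tR : Node → ℕ)
    (htabL : IsTab nL (leftPart mu c m) tL)
    (hstdL : IsStd (leftPart mu c m) tL)
    (hdomL : ColDomOn (l - m + 1) nL (leftPart lam c m) (leftPart mu c m) tL nL)
    (htabR : IsTab (n - nL) (rightPart mu c m) tR)
    (hstdR : IsStd (rightPart mu c m) tR)
    (hdomR : ColDomOn m (n - nL) (rightPart lam c m) (rightPart mu c m) tR (n - nL))
    (hglue : ∀ A, InDiag mu A → t A = glueLR nL c m tL tR A) :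
    IsTab n mu t ∧ IsStd mu t ∧ ColDomOn l n lam mu t n := by
  classical
  have hNLn : nL ≤ n := by rw [← heq]; exact NL_le_n hmu hm1 hm2
  -- value on left nodes
  have hvL : ∀ r c' k, InDiag mu (r, c', k) → m ≤ k → (k = m → c' ≤ c) →
      t (r, c', k) = tL (r, c', k - m + 1) ∧
      1 ≤ tL (r, c', k - m + 1) ∧ tL (r, c', k - m + 1) ≤ nL := by
    intro r c' k hd hk hc
    have hdl := inDiag_leftPart_of (c := c) hd hk hc
    have hb := htabL.1 _ hdl
    rw [hglue _ hd]
    unfold glueLR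
    dsimp only
    rcases Nat.eq_or_lt_of_le hk with h | h
    · have h1 : k - m + 1 = 1 := by omega
      rw [h1] at hb
      rw [if_neg (by omega), if_pos h.symm, if_pos (hc h.symm), h1]
      exact ⟨rfl, hb.1, hb.2⟩
    · rw [if_neg (by omega), if_neg (by omega)]
      exact ⟨rfl, hb.1, hb.2⟩
  -- value on right nodes
  have hvRlt : ∀ r c' k, InDiag mu (r, c', k) → k < m →
      t (r, c', k) = nL + tR (r, c', k) ∧ 1 ≤ tR (r, c', k) ∧
        tR (r, c', k) ≤ n - nL := by
    intro r c' k hd hk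
    have hdr := inDiag_rightPart_of_lt (c := c) hd hk
    have hb := htabR.1 _ hdr
    rw [hglue _ hd]
    unfold glueLR
    dsimp only
    rw [if_pos hk]
    exact ⟨rfl, hb.1, hb.2⟩
  have hvReq : ∀ r c', InDiag mu (r, c', m) → c < c' →
      t (r, c', m) = nL + tR (r, c' - c, m) ∧ 1 ≤ tR (r, c' - c, m) ∧
        tR (r, c' - c, m) ≤ n - nL := by
    intro r c' hd hc
    have hdr := inDiag_rightPart_of_eq (c := c) hd hc
    have hb := htabR.1 _ hdr
    rw [hglue _ hd]
    unfold glueLR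
    dsimp only
    rw [if_neg (by omega), if_pos rfl, if_neg (by omega)]
    exact ⟨rfl, hb.1, hb.2⟩
  -- range
  have hrange : ∀ A, InDiag mu A → 1 ≤ t A ∧ t A ≤ n := by
    intro A hd
    obtain ⟨r, c', k⟩ := A
    rcases Nat.lt_or_ge k m with hk | hk
    · have := hvRlt r c' k hd hk; omega
    · by_cases hkm : k = m
      · subst hkm
        rcases Nat.lt_or_ge c c' with hc | hc
        · have := hvReq r c' hd hc; omega
        · have := hvL r c' k hd hk (fun _ => hc); omega
      · have := hvL r c' k hd hk (fun h => absurd h hkm); omega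
  -- injectivity
  have hinj : ∀ A B, InDiag mu A → InDiag mu B → t A = t B → A = B := by
    intro A B hA hB he
    obtain ⟨r1, c1, k1⟩ := A
    obtain ⟨r2, c2, k2⟩ := B
    have hL1 : ∀ r c' k, InDiag mu (r, c', k) → (m ≤ k ∧ (k = m → c' ≤ c)) →
        t (r, c', k) ≤ nL := by
      intro r c' k hd h
      have := hvL r c' k hd h.1 h.2
      omega
    have hR1 : ∀ r c' k, InDiag mu (r, c', k) → ¬(m ≤ k ∧ (k = m → c' ≤ c)) →
        nL < t (r, c', k) := by
      intro r c' k hd h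
      by_cases hkm : k = m
      · subst hkm
        have hc : c < c' := by by_contra hcc; exact h ⟨le_refl _, fun _ => by omega⟩
        have := hvReq r c' hd hc; omega
      · have hk : k < m := by
          rcases Nat.lt_or_ge k m with h' | h'
          · exact h'
          · exact absurd ⟨h', fun hh => absurd hh hkm⟩ h
        have := hvRlt r c' k hd hk; omega
    by_cases h1 : m ≤ k1 ∧ (k1 = m → c1 ≤ c)
    · by_cases h2 : m ≤ k2 ∧ (k2 = m → c2 ≤ c)
      · -- both left
        have a1 := hvL r1 c1 k1 hA h1.1 h1.2
        have a2 := hvL r2 c2 k2 hB h2.1 h2.2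
        have hd1 := inDiag_leftPart_of (c := c) hA h1.1 h1.2
        have hd2 := inDiag_leftPart_of (c := c) hB h2.1 h2.2
        have hee : tL (r1, c1, k1 - m + 1) = tL (r2, c2, k2 - m + 1) := by omega
        have := htabL.2.1 _ _ hd1 hd2 hee
        rw [Prod.mk.injEq, Prod.mk.injEq] at this
        rw [Prod.mk.injEq, Prod.mk.injEq]
        refine ⟨this.1, this.2.1, by omega⟩
      · have := hL1 r1 c1 k1 hA h1
        have := hR1 r2 c2 k2 hB h2
        omega
    · by_cases h2 : m ≤ k2 ∧ (k2 = m → c2 ≤ c)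
      · have := hR1 r1 c1 k1 hA h1
        have := hL1 r2 c2 k2 hB h2
        omega
      · -- both right
        have key : ∀ r c' k, InDiag mu (r, c', k) → ¬(m ≤ k ∧ (k = m → c' ≤ c)) →
            InDiag (rightPart mu c m) (r, (if k = m then c' - c else c'), k) ∧
            t (r, c', k) = nL + tR (r, (if k = m then c' - c else c'), k) ∧
            (k = m → c < c') := by
          intro r c' k hd h
          by_cases hkm : k = m
          · subst hkm
            have hc : c < c' := by by_contra hcc; exact h ⟨le_refl _, fun _ => by omega⟩
            rw [if_pos rfl]
            exact ⟨inDiag_rightPart_of_eq (c := c) hd hc, (hvReq r c' hd hc).1, fun _ => hc⟩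
          · have hk : k < m := by
              rcases Nat.lt_or_ge k m with h' | h'
              · exact h'
              · exact absurd ⟨h', fun hh => absurd hh hkm⟩ h
            rw [if_neg hkm]
            exact ⟨inDiag_rightPart_of_lt (c := c) hd hk, (hvRlt r c' k hd hk).1,
              fun hh => absurd hh hkm⟩
        have a1 := key r1 c1 k1 hA h1
        have a2 := key r2 c2 k2 hB h2
        have hee : tR (r1, (if k1 = m then c1 - c else c1), k1)
            = tR (r2, (if k2 = m then c2 - c else c2), k2) := by omega
        have := htabR.2.1 _ _ a1.1 a2.1 hee
        rw [Prod.mk.injEq, Prod.mk.injEq] at this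
        rw [Prod.mk.injEq, Prod.mk.injEq]
        refine ⟨this.1, ?_, this.2.2⟩
        have hk12 : k1 = k2 := this.2.2
        by_cases hkm : k1 = m
        · have e1 := a1.2.2 hkm
          have e2 := a2.2.2 (by omega)
          rw [if_pos hkm] at this
          rw [if_pos (by omega : k2 = m)] at this
          omega
        · rw [if_neg hkm] at this
          rw [if_neg (by omega : ¬ k2 = m)] at this
          omega
  -- surjectivity
  have hsurj : ∀ i, 1 ≤ i → i ≤ n → ∃ A, InDiag mu A ∧ t A = i := by
    intro i hi1 hi2
    by_cases hi : i ≤ nL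
    · obtain ⟨A', hA', htA'⟩ := htabL.2.2 i hi1 hi
      obtain ⟨r, c', k'⟩ := A'
      obtain ⟨hk1, hdm, hc1⟩ := inDiag_of_leftPart hm1 hA'
      refine ⟨(r, c', k' + m - 1), hdm, ?_⟩
      have hv := hvL r c' (k' + m - 1) hdm (by omega) (fun h => hc1 (by omega))
      rw [show k' + m - 1 - m + 1 = k' from by omega] at hv
      omega
    · obtain ⟨A', hA', htA'⟩ := htabR.2.2 (i - nL) (by omega) (by omega)
      obtain ⟨r, c', k⟩ := A'
      rcases inDiag_of_rightPart hA' with ⟨hk, hdm⟩ | ⟨hk, hcc, hdm⟩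
      · refine ⟨(r, c', k), hdm, ?_⟩
        have := hvRlt r c' k hdm hk
        omega
      · refine ⟨(r, c' + c, m), hdm, ?_⟩
        have h2 := hvReq r (c' + c) hdm (by omega)
        rw [show c' + c - c = c' from by omega] at h2
        rw [hk] at htA'
        omega
  -- standardness
  have hrow : RowStrict mu t := by
    intro r c' k h1 h2
    rcases Nat.lt_or_ge k m with hk | hk
    · have a1 := hvRlt r c' k h1 hk
      have a2 := hvRlt r (c' + 1) k h2 hk
      have hs := hstdR.1 r c' k (inDiag_rightPart_of_lt (c := c) h1 hk)
        (inDiag_rightPart_of_lt (c := c) h2 hk)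
      omega
    · by_cases hkm : k = m
      · subst hkm
        rcases Nat.lt_or_ge c c' with hc | hc
        · -- both right
          have a1 := hvReq r c' h1 hc
          have a2 := hvReq r (c' + 1) h2 (by omega)
          have hs := hstdR.1 r (c' - c) k (inDiag_rightPart_of_eq (c := c) h1 hc)
            (by
              have := inDiag_rightPart_of_eq (c := c) h2 (by omega : c < c' + 1)
              rw [show c' + 1 - c = c' - c + 1 from by omega] at this
              exact this)
          rw [show c' + 1 - c = c' - c + 1 from by omega] at a2
          omega
        · rcases Nat.lt_or_ge c (c' + 1) with hc2 | hc2
          · -- boundary: c' = c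
            have a1 := hvL r c' k h1 hk (fun _ => hc)
            have a2 := hvReq r (c' + 1) h2 (by omega)
            omega
          · -- both left
            have a1 := hvL r c' k h1 hk (fun _ => hc)
            have a2 := hvL r (c' + 1) k h2 hk (fun _ => by omega)
            have e1 : k - k + 1 = 1 := by omega
            have hs := hstdL.1 r c' 1
              (by have := inDiag_leftPart_of (c := c) h1 hk (fun _ => hc);
                  rw [e1] at this; exact this)
              (by have := inDiag_leftPart_of (c := c) h2 hk (fun _ => by omega);
                  rw [e1] at this; exact this)
            rw [e1] at a1 a2
            omega
      · have a1 := hvL r c' k h1 hk (fun h => absurd h hkm)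
        have a2 := hvL r (c' + 1) k h2 hk (fun h => absurd h hkm)
        have hs := hstdL.1 r c' (k - m + 1)
          (inDiag_leftPart_of (c := c) h1 hk (fun h => absurd h hkm))
          (inDiag_leftPart_of (c := c) h2 hk (fun h => absurd h hkm))
        omega
  have hcol : ColStrict mu t := by
    intro r c' k h1 h2
    rcases Nat.lt_or_ge k m with hk | hk
    · have a1 := hvRlt r c' k h1 hk
      have a2 := hvRlt (r + 1) c' k h2 hk
      have hs := hstdR.2 r c' k (inDiag_rightPart_of_lt (c := c) h1 hk)
        (inDiag_rightPart_of_lt (c := c) h2 hk)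
      omega
    · by_cases hkm : k = m
      · subst hkm
        rcases Nat.lt_or_ge c c' with hc | hc
        · have a1 := hvReq r c' h1 hc
          have a2 := hvReq (r + 1) c' h2 hc
          have hs := hstdR.2 r (c' - c) k (inDiag_rightPart_of_eq (c := c) h1 hc)
            (inDiag_rightPart_of_eq (c := c) h2 hc)
          omega
        · have a1 := hvL r c' k h1 hk (fun _ => hc)
          have a2 := hvL (r + 1) c' k h2 hk (fun _ => hc)
          have e1 : k - k + 1 = 1 := by omega
          have hs := hstdL.2 r c' 1
            (by have := inDiag_leftPart_of (c := c) h1 hk (fun _ => hc);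
                rw [e1] at this; exact this)
            (by have := inDiag_leftPart_of (c := c) h2 hk (fun _ => hc);
                rw [e1] at this; exact this)
          rw [e1] at a1 a2
          omega
      · have a1 := hvL r c' k h1 hk (fun h => absurd h hkm)
        have a2 := hvL (r + 1) c' k h2 hk (fun h => absurd h hkm)
        have hs := hstdL.2 r c' (k - m + 1)
          (inDiag_leftPart_of (c := c) h1 hk (fun h => absurd h hkm))
          (inDiag_leftPart_of (c := c) h2 hk (fun h => absurd h hkm))
        omega
  -- column dominance
  have hcd : ColDomOn l n lam mu t n := by
    intro i A B hi1 hi2 hA htA hB htB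
    obtain ⟨rA, cA, kA⟩ := A
    obtain ⟨rB, cB, kB⟩ := B
    have hkbB := diag_bounds hlam hB
    rw [weaklyLeft_mk]
    by_cases hi : i ≤ nL
    · have hBL : m < kB ∨ (kB = m ∧ cB ≤ c) :=
        (colTab_le_iff (c := c) hlam hm1 hm2 rB cB kB hB).1 (by rw [htB, ← hnL]; exact hi)
      have hAL : m ≤ kA ∧ (kA = m → cA ≤ c) := by
        by_contra hna
        by_cases hkm : kA = m
        · subst hkm
          have hc : c < cA := by by_contra hcc; exact hna ⟨le_refl _, fun _ => by omega⟩
          have := hvReq rA cA hA hc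
          omega
        · have hk : kA < m := by
            rcases Nat.lt_or_ge kA m with h' | h'
            · exact h'
            · exact absurd ⟨h', fun hh => absurd hh hkm⟩ hna
          have := hvRlt rA cA kA hA hk
          omega
      have hAd := inDiag_leftPart_of (c := c) hA hAL.1 hAL.2
      have hBd := inDiag_leftPart_of (c := c) (m := m) hB (by omega) (fun h => by omega)
      have htA' : tL (rA, cA, kA - m + 1) = i := by
        have := hvL rA cA kA hA hAL.1 hAL.2
        omega
      have htB' : colTab (l - m + 1) nL (leftPart lam c m) (rB, cB, kB - m + 1) = i := by
        have h := colTab_left (c := c) hlam hm1 hm2 rB cB kB (by omega) hB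
          (fun h => by omega)
        rw [← hnL] at h
        rw [h]
        exact htB
      have hwl := hdomL i _ _ hi1 hi hAd htA' hBd htB'
      rw [weaklyLeft_mk] at hwl
      omega
    · -- right side
      have hBR : ¬(m < kB ∨ (kB = m ∧ cB ≤ c)) := by
        intro hcon
        have := (colTab_le_iff (c := c) hlam hm1 hm2 rB cB kB hB).2 hcon
        rw [htB, ← hnL] at this
        omega
      have hii : nL + 1 ≤ i := by omega
      -- A is on the right
      have hAR : ¬(m ≤ kA ∧ (kA = m → cA ≤ c)) := by
        intro hcon
        have := hvL rA cA kA hA hcon.1 hcon.2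
        omega
      rcases Nat.lt_or_ge kB m with hkB | hkB
      · have hBd := inDiag_rightPart_of_lt (c := c) hB hkB
        have hctB : colTab m (n - nL) (rightPart lam c m) (rB, cB, kB) = i - nL := by
          have h := colTab_right_lt (c := c) hlam hm1 hm2 rB cB kB hkB hB
          rw [← hnL] at h
          omega
        by_cases hkAm : kA = m
        · have hAm : InDiag mu (rA, cA, m) := by rw [← hkAm]; exact hA
          have hc : c < cA := by
            by_contra hcc
            exact hAR ⟨by omega, fun _ => by omega⟩
          have ha := hvReq rA cA hAm hc
          have hAd := inDiag_rightPart_of_eq (c := c) hAm hc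
          have htAm : t (rA, cA, m) = i := by rw [← hkAm]; exact htA
          have htA' : tR (rA, cA - c, m) = i - nL := by omega
          have hwl := hdomR (i - nL) _ _ (by omega) (by omega) hAd htA' hBd hctB
          rw [weaklyLeft_mk] at hwl
          omega
        · have hk : kA < m := by
            rcases Nat.lt_or_ge kA m with h' | h'
            · exact h'
            · exact absurd ⟨h', fun hh => absurd hh hkAm⟩ hAR
          have ha := hvRlt rA cA kA hA hk
          have hAd := inDiag_rightPart_of_lt (c := c) hA hk
          have htA' : tR (rA, cA, kA) = i - nL := by omega
          have hwl := hdomR (i - nL) _ _ (by omega) (by omega) hAd htA' hBd hctB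
          rw [weaklyLeft_mk] at hwl
          omega
      · have hkBm : kB = m := by omega
        have hBm : InDiag lam (rB, cB, m) := by rw [← hkBm]; exact hB
        have hcB : c < cB := by
          by_contra hcc
          exact hBR (Or.inr ⟨hkBm, by omega⟩)
        have hBd := inDiag_rightPart_of_eq (c := c) hBm hcB
        have hctB : colTab m (n - nL) (rightPart lam c m) (rB, cB - c, m) = i - nL := by
          have h := colTab_right_eq (c := c) hlam hm1 hm2 rB cB hBm hcB
          rw [← hnL] at h
          have htBm : colTab l n lam (rB, cB, m) = i := by rw [← hkBm]; exact htB
          omega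
        by_cases hkAm : kA = m
        · have hAm : InDiag mu (rA, cA, m) := by rw [← hkAm]; exact hA
          have hc : c < cA := by
            by_contra hcc
            exact hAR ⟨by omega, fun _ => by omega⟩
          have ha := hvReq rA cA hAm hc
          have hAd := inDiag_rightPart_of_eq (c := c) hAm hc
          have htAm : t (rA, cA, m) = i := by rw [← hkAm]; exact htA
          have htA' : tR (rA, cA - c, m) = i - nL := by omega
          have hwl := hdomR (i - nL) _ _ (by omega) (by omega) hAd htA' hBd hctB
          rw [weaklyLeft_mk] at hwl
          omega
        · have hk : kA < m := by
            rcases Nat.lt_or_ge kA m with h' | h'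
            · exact h'
            · exact absurd ⟨h', fun hh => absurd hh hkAm⟩ hAR
          have ha := hvRlt rA cA kA hA hk
          have hAd := inDiag_rightPart_of_lt (c := c) hA hk
          have htA' : tR (rA, cA, kA) = i - nL := by omega
          have hwl := hdomR (i - nL) _ _ (by omega) (by omega) hAd htA' hBd hctB
          rw [weaklyLeft_mk] at hwl
          omega
  exact ⟨⟨hrange, hinj, hsurj⟩, ⟨hrow, hcol⟩, hcd⟩

end Bwd
section Fwd
open Finset

lemma fwd (l n : ℕ) (hl : 1 ≤ l) (hn : 1 ≤ n)
    (c m : ℕ) (hm1 : 1 ≤ m) (hm2 : m ≤ l)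
    (lam mu : ℕ → ℕ → ℕ) (hlam : IsMP l n lam) (hmu : IsMP l n mu)
    (nL : ℕ) (hnL : nL = mpSize (l - m + 1) n (leftPart lam c m))
    (heq : mpSize (l - m + 1) n (leftPart mu c m) = nL)
    (t : Node → ℕ) (htab : IsTab n mu t) (hstd : IsStd mu t)
    (hdomt : ColDomOn l n lam mu t n) :
    ∃ tL tR : Node → ℕ,
      IsTab nL (leftPart mu c m) tL ∧ IsStd (leftPart mu c m) tL ∧
      ColDomOn (l - m + 1) nL (leftPart lam c m) (leftPart mu c m) tL nL ∧
      IsTab (n - nL) (rightPart mu c m) tR ∧ IsStd (rightPart mu c m) tR ∧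
      ColDomOn m (n - nL) (rightPart lam c m) (rightPart mu c m) tR (n - nL) ∧
      ∀ A, InDiag mu A → t A = glueLR nL c m tL tR A := by
  classical
  have hNLn : nL ≤ n := by rw [← heq]; exact NL_le_n hmu hm1 hm2
  have hloc1 : ∀ r c' k, InDiag mu (r, c', k) → t (r, c', k) ≤ nL →
      (m ≤ k ∧ (k = m → c' ≤ c)) := by
    intro r c' k hA htA
    have hb := htab.1 _ hA
    obtain ⟨B, hB, hBi⟩ := colTab_surj hlam hl (t (r, c', k)) hb.1 (le_trans htA hNLn)
    obtain ⟨rB, cB, kB⟩ := B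
    have hBL : m < kB ∨ (kB = m ∧ cB ≤ c) :=
      (colTab_le_iff (c := c) hlam hm1 hm2 rB cB kB hB).1
        (by rw [hBi, ← hnL]; exact htA)
    have hwl := hdomt (t (r, c', k)) (r, c', k) (rB, cB, kB) hb.1 hb.2 hA rfl hB hBi
    rw [weaklyLeft_mk] at hwl
    omega
  set LF := (box l n).filter
      (fun A : Node => InDiag mu A ∧ (m < A.2.2 ∨ (A.2.2 = m ∧ A.2.1 ≤ c))) with hLF
  have hLFcard : LF.card = nL := by rw [hLF, left_card hmu hm1 hm2, heq]
  have hsub : Finset.Icc 1 nL ⊆ LF.image t := by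
    intro i hi
    rw [Finset.mem_Icc] at hi
    obtain ⟨A, hA, hAt⟩ := htab.2.2 i hi.1 (le_trans hi.2 hNLn)
    obtain ⟨r, c', k⟩ := A
    have hl1 := hloc1 r c' k hA (by omega)
    rw [Finset.mem_image]
    refine ⟨(r, c', k), ?_, hAt⟩
    rw [hLF, Finset.mem_filter]
    refine ⟨mem_box hmu hA, hA, ?_⟩
    dsimp only
    omega
  have him : LF.image t = Finset.Icc 1 nL := by
    refine (Finset.eq_of_subset_of_card_le hsub ?_).symm
    have h1 : (LF.image t).card ≤ LF.card := Finset.card_image_le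
    rw [Nat.card_Icc]
    omega
  have hloc2 : ∀ r c' k, InDiag mu (r, c', k) →
      (m ≤ k ∧ (k = m → c' ≤ c)) → t (r, c', k) ≤ nL := by
    intro r c' k hA hL
    have hmem : ((r, c', k) : Node) ∈ LF := by
      rw [hLF, Finset.mem_filter]
      refine ⟨mem_box hmu hA, hA, ?_⟩
      dsimp only
      omega
    have h2 : t (r, c', k) ∈ LF.image t := Finset.mem_image_of_mem t hmem
    rw [him, Finset.mem_Icc] at h2
    omega
  have hloc3 : ∀ r c' k, InDiag mu (r, c', k) →
      ¬(m ≤ k ∧ (k = m → c' ≤ c)) → nL < t (r, c', k) := by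
    intro r c' k hA hn'
    by_contra hle
    exact hn' (hloc1 r c' k hA (by omega))
  have hmuLmem : ∀ r c' k', InDiag (leftPart mu c m) (r, c', k') →
      1 ≤ k' ∧ InDiag mu (r, c', k' + m - 1) ∧ (k' + m - 1 = m → c' ≤ c) ∧
        m ≤ k' + m - 1 := by
    intro r c' k' hd
    obtain ⟨h1, h2, h3⟩ := inDiag_of_leftPart (c := c) hm1 hd
    exact ⟨h1, h2, fun h => h3 (by omega), by omega⟩
  refine ⟨fun A => t (A.1, A.2.1, A.2.2 + m - 1),
    fun A => (if A.2.2 = m then t (A.1, A.2.1 + c, m) else t A) - nL,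
    ⟨?_, ?_, ?_⟩, ⟨?_, ?_⟩, ?_, ⟨?_, ?_, ?_⟩, ⟨?_, ?_⟩, ?_, ?_⟩
  · -- tL bounds
    intro A hd
    obtain ⟨r, c', k'⟩ := A
    obtain ⟨h1, h2, h3, h4⟩ := hmuLmem r c' k' hd
    have hb := htab.1 _ h2
    have h5 := hloc2 r c' (k' + m - 1) h2 ⟨h4, h3⟩
    dsimp only
    omega
  · -- tL injective
    intro A B hA hB he
    obtain ⟨r1, c1, k1⟩ := A
    obtain ⟨r2, c2, k2⟩ := B
    obtain ⟨h11, h12, _, _⟩ := hmuLmem r1 c1 k1 hA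
    obtain ⟨h21, h22, _, _⟩ := hmuLmem r2 c2 k2 hB
    dsimp only at he
    have := htab.2.1 _ _ h12 h22 he
    rw [Prod.mk.injEq, Prod.mk.injEq] at this
    rw [Prod.mk.injEq, Prod.mk.injEq]
    exact ⟨this.1, this.2.1, by omega⟩
  · -- tL surjective
    intro i hi1 hi2
    obtain ⟨A, hA, hAt⟩ := htab.2.2 i hi1 (le_trans hi2 hNLn)
    obtain ⟨r, c', k⟩ := A
    have hL := hloc1 r c' k hA (by omega)
    refine ⟨(r, c', k - m + 1), inDiag_leftPart_of (c := c) hA hL.1 hL.2, ?_⟩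
    dsimp only
    rw [show k - m + 1 + m - 1 = k from by omega]
    exact hAt
  · -- tL row strict
    intro r c' k' hd1 hd2
    obtain ⟨h11, h12, _, _⟩ := hmuLmem r c' k' hd1
    obtain ⟨_, h22, _, _⟩ := hmuLmem r (c' + 1) k' hd2
    dsimp only
    exact hstd.1 r c' (k' + m - 1) h12 h22
  · -- tL col strict
    intro r c' k' hd1 hd2
    obtain ⟨h11, h12, _, _⟩ := hmuLmem r c' k' hd1
    obtain ⟨_, h22, _, _⟩ := hmuLmem (r + 1) c' k' hd2
    dsimp only
    exact hstd.2 r c' (k' + m - 1) h12 h22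
  · -- tL column dominance
    intro i A B hi1 hi2 hA htA hB htB
    obtain ⟨rA, cA, kA⟩ := A
    obtain ⟨rB, cB, kB⟩ := B
    obtain ⟨hA1, hA2, hA3, hA4⟩ := hmuLmem rA cA kA hA
    obtain ⟨hB1, hB2, hB3⟩ := inDiag_of_leftPart (c := c) hm1 hB
    dsimp only at htA
    have hct := colTab_left (c := c) hlam hm1 hm2 rB cB (kB + m - 1) (by omega) hB2
      (fun h => hB3 (by omega))
    rw [← hnL, show kB + m - 1 - m + 1 = kB from by omega] at hct
    have hctB : colTab l n lam (rB, cB, kB + m - 1) = i := by rw [← hct]; exact htB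
    have hwl := hdomt i (rA, cA, kA + m - 1) (rB, cB, kB + m - 1) hi1
      (le_trans hi2 hNLn) hA2 htA hB2 hctB
    rw [weaklyLeft_mk] at hwl
    rw [weaklyLeft_mk]
    omega
  · -- tR bounds
    intro A hd
    obtain ⟨r, c', k⟩ := A
    dsimp only
    rcases inDiag_of_rightPart hd with ⟨hk, hdm⟩ | ⟨hkm, hcc, hdm⟩
    · rw [if_neg (by omega)]
      have hb := htab.1 _ hdm
      have h3 := hloc3 r c' k hdm (by omega)
      omega
    · rw [if_pos hkm]
      have hb := htab.1 _ hdm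
      have h3 := hloc3 r (c' + c) m hdm (by omega)
      omega
  · -- tR injective
    intro A B hA hB he
    obtain ⟨r1, c1, k1⟩ := A
    obtain ⟨r2, c2, k2⟩ := B
    dsimp only at he
    rw [Prod.mk.injEq, Prod.mk.injEq]
    rcases inDiag_of_rightPart hA with ⟨hk1, h1m⟩ | ⟨hk1m, hc1, h1m⟩ <;>
      rcases inDiag_of_rightPart hB with ⟨hk2, h2m⟩ | ⟨hk2m, hc2, h2m⟩
    · rw [if_neg (by omega), if_neg (by omega)] at he
      have l1 := hloc3 r1 c1 k1 h1m (by omega)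
      have l2 := hloc3 r2 c2 k2 h2m (by omega)
      have := htab.2.1 _ _ h1m h2m (by omega)
      rw [Prod.mk.injEq, Prod.mk.injEq] at this
      omega
    · rw [if_neg (by omega), if_pos hk2m] at he
      have l1 := hloc3 r1 c1 k1 h1m (by omega)
      have l2 := hloc3 r2 (c2 + c) m h2m (by omega)
      have := htab.2.1 _ _ h1m h2m (by omega)
      rw [Prod.mk.injEq, Prod.mk.injEq] at this
      omega
    · rw [if_pos hk1m, if_neg (by omega)] at he
      have l1 := hloc3 r1 (c1 + c) m h1m (by omega)
      have l2 := hloc3 r2 c2 k2 h2m (by omega)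
      have := htab.2.1 _ _ h1m h2m (by omega)
      rw [Prod.mk.injEq, Prod.mk.injEq] at this
      omega
    · rw [if_pos hk1m, if_pos hk2m] at he
      have l1 := hloc3 r1 (c1 + c) m h1m (by omega)
      have l2 := hloc3 r2 (c2 + c) m h2m (by omega)
      have := htab.2.1 _ _ h1m h2m (by omega)
      rw [Prod.mk.injEq, Prod.mk.injEq] at this
      omega
  · -- tR surjective
    intro i hi1 hi2
    obtain ⟨A, hA, hAt⟩ := htab.2.2 (nL + i) (by omega) (by omega)
    obtain ⟨r, c', k⟩ := A
    have hnotL : ¬(m ≤ k ∧ (k = m → c' ≤ c)) := by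
      intro hcon
      have := hloc2 r c' k hA hcon
      omega
    by_cases hkm : k = m
    · have hAm : InDiag mu (r, c', m) := by rw [← hkm]; exact hA
      have hc : c < c' := by
        by_contra hcc
        exact hnotL ⟨by omega, fun _ => by omega⟩
      have hAtm : t (r, c', m) = nL + i := by rw [← hkm]; exact hAt
      refine ⟨(r, c' - c, m), inDiag_rightPart_of_eq (c := c) hAm hc, ?_⟩
      dsimp only
      rw [if_pos rfl, show c' - c + c = c' from by omega]
      omega
    · have hk : k < m := by
        rcases Nat.lt_or_ge k m with h' | h'
        · exact h'
        · exact absurd ⟨h', fun hh => absurd hh hkm⟩ hnotL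
      refine ⟨(r, c', k), inDiag_rightPart_of_lt (c := c) hA hk, ?_⟩
      dsimp only
      rw [if_neg hkm]
      omega
  · -- tR row strict
    intro r c' k hd1 hd2
    dsimp only
    rcases inDiag_of_rightPart hd1 with ⟨hk, h1m⟩ | ⟨hkm, hc1, h1m⟩
    · rcases inDiag_of_rightPart hd2 with ⟨_, h2m⟩ | ⟨hkm2, _, _⟩
      · rw [if_neg (by omega), if_neg (by omega)]
        have hs := hstd.1 r c' k h1m h2m
        have l1 := hloc3 r c' k h1m (by omega)
        have l2 := hloc3 r (c' + 1) k h2m (by omega)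
        omega
      · omega
    · rcases inDiag_of_rightPart hd2 with ⟨hk2, _⟩ | ⟨_, hc2, h2m⟩
      · omega
      · rw [if_pos hkm, if_pos hkm]
        rw [show c' + 1 + c = c' + c + 1 from by omega] at h2m ⊢
        have hs := hstd.1 r (c' + c) m h1m h2m
        have l1 := hloc3 r (c' + c) m h1m (by omega)
        have l2 := hloc3 r (c' + c + 1) m h2m (by omega)
        omega
  · -- tR col strict
    intro r c' k hd1 hd2
    dsimp only
    rcases inDiag_of_rightPart hd1 with ⟨hk, h1m⟩ | ⟨hkm, hc1, h1m⟩
    · rcases inDiag_of_rightPart hd2 with ⟨_, h2m⟩ | ⟨hkm2, _, _⟩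
      · rw [if_neg (by omega), if_neg (by omega)]
        have hs := hstd.2 r c' k h1m h2m
        have l1 := hloc3 r c' k h1m (by omega)
        have l2 := hloc3 (r + 1) c' k h2m (by omega)
        omega
      · omega
    · rcases inDiag_of_rightPart hd2 with ⟨hk2, _⟩ | ⟨_, hc2, h2m⟩
      · omega
      · rw [if_pos hkm, if_pos hkm]
        have hs := hstd.2 r (c' + c) m h1m h2m
        have l1 := hloc3 r (c' + c) m h1m (by omega)
        have l2 := hloc3 (r + 1) (c' + c) m h2m (by omega)
        omega
  · -- tR column dominance
    intro i A B hi1 hi2 hA htA hB htB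
    obtain ⟨rA, cA, kA⟩ := A
    obtain ⟨rB, cB, kB⟩ := B
    dsimp only at htA
    rw [weaklyLeft_mk]
    rcases inDiag_of_rightPart hA with ⟨hkA, hAm⟩ | ⟨hkAm, hcA, hAm⟩
    · rw [if_neg (by omega)] at htA
      have lA := hloc3 rA cA kA hAm (by omega)
      have hbA := htab.1 _ hAm
      have htA2 : t (rA, cA, kA) = nL + i := by omega
      rcases inDiag_of_rightPart hB with ⟨hkB, hBm⟩ | ⟨hkBm, hcB, hBm⟩
      · have h := colTab_right_lt (c := c) hlam hm1 hm2 rB cB kB hkB hBm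
        rw [← hnL] at h
        have hctB : colTab l n lam (rB, cB, kB) = nL + i := by omega
        have hwl := hdomt (nL + i) (rA, cA, kA) (rB, cB, kB) (by omega) (by omega)
          hAm htA2 hBm hctB
        rw [weaklyLeft_mk] at hwl
        omega
      · have h := colTab_right_eq (c := c) hlam hm1 hm2 rB (cB + c) hBm (by omega)
        rw [← hnL, show cB + c - c = cB from by omega] at h
        have htBm : colTab m (n - nL) (rightPart lam c m) (rB, cB, m) = i := by
          rw [hkBm] at htB; exact htB
        have hctB : colTab l n lam (rB, cB + c, m) = nL + i := by omega
        have hwl := hdomt (nL + i) (rA, cA, kA) (rB, cB + c, m) (by omega) (by omega)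
          hAm htA2 hBm hctB
        rw [weaklyLeft_mk] at hwl
        omega
    · rw [if_pos hkAm] at htA
      have lA := hloc3 rA (cA + c) m hAm (by omega)
      have hbA := htab.1 _ hAm
      have htA2 : t (rA, cA + c, m) = nL + i := by omega
      rcases inDiag_of_rightPart hB with ⟨hkB, hBm⟩ | ⟨hkBm, hcB, hBm⟩
      · have h := colTab_right_lt (c := c) hlam hm1 hm2 rB cB kB hkB hBm
        rw [← hnL] at h
        have hctB : colTab l n lam (rB, cB, kB) = nL + i := by omega
        have hwl := hdomt (nL + i) (rA, cA + c, m) (rB, cB, kB) (by omega) (by omega)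
          hAm htA2 hBm hctB
        rw [weaklyLeft_mk] at hwl
        omega
      · have h := colTab_right_eq (c := c) hlam hm1 hm2 rB (cB + c) hBm (by omega)
        rw [← hnL, show cB + c - c = cB from by omega] at h
        have htBm : colTab m (n - nL) (rightPart lam c m) (rB, cB, m) = i := by
          rw [hkBm] at htB; exact htB
        have hctB : colTab l n lam (rB, cB + c, m) = nL + i := by omega
        have hwl := hdomt (nL + i) (rA, cA + c, m) (rB, cB + c, m) (by omega) (by omega)
          hAm htA2 hBm hctB
        rw [weaklyLeft_mk] at hwl
        omega
  · -- glue identity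
    intro A hA
    obtain ⟨r, c', k⟩ := A
    unfold glueLR
    dsimp only
    by_cases hk : k < m
    · rw [if_pos hk, if_neg (by omega)]
      have h3 := hloc3 r c' k hA (by omega)
      have hb := htab.1 _ hA
      omega
    · by_cases hkm : k = m
      · rw [if_neg hk, if_pos hkm]
        by_cases hcc : c' ≤ c
        · rw [if_pos hcc]
          rw [show (1 : ℕ) + m - 1 = m from by omega, hkm]
        · rw [if_neg hcc, if_pos rfl, show c' - c + c = c' from by omega]
          have hAm : InDiag mu (r, c', m) := by rw [← hkm]; exact hA
          have h3 := hloc3 r c' m hAm (by omega)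
          have hb := htab.1 _ hAm
          rw [hkm]
          omega
      · rw [if_neg hk, if_neg hkm]
        rw [show k - m + 1 + m - 1 = k from by omega]

end Fwd
/-- generalised column removal for dominated tableaux. If `λ ⊵ μ`
and `|λ_L(c,m)| = |μ_L(c,m)| = n_L`, then
`Std_λ(μ) = { t_L # t_R : t_L ∈ Std_{λ_L(c,m)}(μ_L(c,m)),
t_R ∈ Std_{λ_R(c,m)}(μ_R(c,m)) }`. -/
theorem stdColDom_generalised_column_removal (l n : ℕ) (hl : 1 ≤ l) (hn : 1 ≤ n)
    (c m : ℕ) (hm1 : 1 ≤ m) (hm2 : m ≤ l)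
    (lam mu : ℕ → ℕ → ℕ) (hlam : IsMP l n lam) (hmu : IsMP l n mu)
    (hdom : Dom l n lam mu)
    (nL : ℕ) (hnL : nL = mpSize (l - m + 1) n (leftPart lam c m))
    (heq : mpSize (l - m + 1) n (leftPart mu c m) = nL) :
    ∀ t : Node → ℕ,
      (IsTab n mu t ∧ IsStd mu t ∧ ColDomOn l n lam mu t n) ↔
        ∃ tL tR : Node → ℕ,
          IsTab nL (leftPart mu c m) tL ∧ IsStd (leftPart mu c m) tL ∧
          ColDomOn (l - m + 1) nL (leftPart lam c m) (leftPart mu c m) tL nL ∧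
          IsTab (n - nL) (rightPart mu c m) tR ∧ IsStd (rightPart mu c m) tR ∧
          ColDomOn m (n - nL) (rightPart lam c m) (rightPart mu c m) tR (n - nL) ∧
          ∀ A, InDiag mu A → t A = glueLR nL c m tL tR A := by
  intro t
  constructor
  · rintro ⟨h1, h2, h3⟩
    exact fwd l n hl hn c m hm1 hm2 lam mu hlam hmu nL hnL heq t h1 h2 h3
  · rintro ⟨tL, tR, a1, a2, a3, a4, a5, a6, a7⟩
    exact bwd l n hl hn c m hm1 hm2 lam mu hlam hmu nL hnL heq t tL tR a1 a2 a3 a4 a5 a6 a7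

end FS
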